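/- arXiv:1704.08144 — 5 statements merged into one kernel-verified Lean document; each statement's English description precedes it below -/
import Mathlib

section
/- For all real x with 0 ≤ x ≤ π, one has sin(x)/x ≤ exp(-x²/6) (interpreting sin(x)/x as 1 at x = 0). -/
open Real

private lemma aux_nonneg {f g : ℝ → ℝ} (h0 : f 0 = 0)
    (hd : ∀ x, HasDerivAt f (g x) x) (hg : ∀ x, 0 ≤ x → 0 ≤ g x) :
    ∀ x, 0 ≤ x → 0 ≤ f x := by
  intro x hx
  have mono : MonotoneOn f (Set.Ici (0:ℝ)) := by
    apply monotoneOn_of_hasDerivWithinAt_nonneg (convex_Ici 0)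
      (fun y _ => (hd y).continuousAt.continuousWithinAt)
      (fun y _ => (hd y).hasDerivWithinAt)
    intro y hy
    rw [interior_Ici] at hy
    exact hg y hy.le
  have h := mono Set.self_mem_Ici (Set.mem_Ici.2 hx) hx
  rw [h0] at h
  exact h

private lemma hasDerivAt_poly8 (a₀ a₂ a₄ a₆ a₈ : ℝ) (x : ℝ) :
    HasDerivAt (fun y : ℝ => a₀ + a₂*y^2 + a₄*y^4 + a₆*y^6 + a₈*y^8)
      (2*a₂*x + 4*a₄*x^3 + 6*a₆*x^5 + 8*a₈*x^7) x := by
  have h := ((((hasDerivAt_const x a₀).add ((hasDerivAt_pow 2 x).const_mul a₂)).add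
    ((hasDerivAt_pow 4 x).const_mul a₄)).add ((hasDerivAt_pow 6 x).const_mul a₆)).add
    ((hasDerivAt_pow 8 x).const_mul a₈)
  convert h using 1
  · rfl
  · rfl
  · funext y; norm_num
  · norm_num; ring

private lemma hasDerivAt_poly9 (a₁ a₃ a₅ a₇ a₉ : ℝ) (x : ℝ) :
    HasDerivAt (fun y : ℝ => a₁*y + a₃*y^3 + a₅*y^5 + a₇*y^7 + a₉*y^9)
      (a₁ + 3*a₃*x^2 + 5*a₅*x^4 + 7*a₇*x^6 + 9*a₉*x^8) x := by
  have h := (((((hasDerivAt_pow 1 x).const_mul a₁).add ((hasDerivAt_pow 3 x).const_mul a₃)).add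
    ((hasDerivAt_pow 5 x).const_mul a₅)).add ((hasDerivAt_pow 7 x).const_mul a₇)).add
    ((hasDerivAt_pow 9 x).const_mul a₉)
  convert h using 1
  · rfl
  · rfl
  · funext y; norm_num
  · norm_num; ring

private lemma hasDerivAt_poly5 (a₀ a₁ a₂ a₃ a₄ a₅ : ℝ) (x : ℝ) :
    HasDerivAt (fun y : ℝ => a₀ + a₁*y + a₂*y^2 + a₃*y^3 + a₄*y^4 + a₅*y^5)
      (a₁ + 2*a₂*x + 3*a₃*x^2 + 4*a₄*x^3 + 5*a₅*x^4) x := by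
  have h := (((((hasDerivAt_const x a₀).add ((hasDerivAt_pow 1 x).const_mul a₁)).add
    ((hasDerivAt_pow 2 x).const_mul a₂)).add ((hasDerivAt_pow 3 x).const_mul a₃)).add
    ((hasDerivAt_pow 4 x).const_mul a₄)).add ((hasDerivAt_pow 5 x).const_mul a₅)
  convert h using 1
  · rfl
  · rfl
  · funext y; norm_num
  · norm_num; ring

/-- degree 9 upper bound for sin on [0, ∞) -/
private lemma sin_upper9 : ∀ x : ℝ, 0 ≤ x →
    Real.sin x ≤ x - x^3/6 + x^5/120 - x^7/5040 + x^9/362880 := by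
  have s1 : ∀ x : ℝ, 0 ≤ x → Real.sin x ≤ x := by
    intro x hx
    rcases hx.eq_or_lt with h | h
    · simp [← h]
    · exact (Real.sin_lt h).le
  -- cos x ≥ 1 - x²/2
  have c2 : ∀ x : ℝ, 0 ≤ x →
      0 ≤ Real.cos x - (1 + (-1/2)*x^2 + 0*x^4 + 0*x^6 + 0*x^8) := by
    apply aux_nonneg (g := fun y : ℝ =>
      -Real.sin y - (2*(-1/2)*y + 4*0*y^3 + 6*0*y^5 + 8*0*y^7))
    · norm_num
    · intro y; exact (Real.hasDerivAt_cos y).sub (hasDerivAt_poly8 1 (-1/2) 0 0 0 y)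
    · intro y hy; nlinarith [s1 y hy]
  -- sin x ≥ x - x³/6
  have s3 : ∀ x : ℝ, 0 ≤ x →
      0 ≤ Real.sin x - (1*x + (-1/6)*x^3 + 0*x^5 + 0*x^7 + 0*x^9) := by
    apply aux_nonneg (g := fun y : ℝ =>
      Real.cos y - (1 + 3*(-1/6)*y^2 + 5*0*y^4 + 7*0*y^6 + 9*0*y^8))
    · norm_num
    · intro y; exact (Real.hasDerivAt_sin y).sub (hasDerivAt_poly9 1 (-1/6) 0 0 0 y)
    · intro y hy; nlinarith [c2 y hy]
  -- cos x ≤ 1 - x²/2 + x⁴/24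
  have c4 : ∀ x : ℝ, 0 ≤ x →
      0 ≤ (1 + (-1/2)*x^2 + (1/24)*x^4 + 0*x^6 + 0*x^8) - Real.cos x := by
    apply aux_nonneg (g := fun y : ℝ =>
      (2*(-1/2)*y + 4*(1/24)*y^3 + 6*0*y^5 + 8*0*y^7) - -Real.sin y)
    · norm_num
    · intro y; exact (hasDerivAt_poly8 1 (-1/2) (1/24) 0 0 y).sub (Real.hasDerivAt_cos y)
    · intro y hy; nlinarith [s3 y hy]
  -- sin x ≤ x - x³/6 + x⁵/120
  have s5 : ∀ x : ℝ, 0 ≤ x →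
      0 ≤ (1*x + (-1/6)*x^3 + (1/120)*x^5 + 0*x^7 + 0*x^9) - Real.sin x := by
    apply aux_nonneg (g := fun y : ℝ =>
      (1 + 3*(-1/6)*y^2 + 5*(1/120)*y^4 + 7*0*y^6 + 9*0*y^8) - Real.cos y)
    · norm_num
    · intro y; exact (hasDerivAt_poly9 1 (-1/6) (1/120) 0 0 y).sub (Real.hasDerivAt_sin y)
    · intro y hy; nlinarith [c4 y hy]
  -- cos x ≥ 1 - x²/2 + x⁴/24 - x⁶/720
  have c6 : ∀ x : ℝ, 0 ≤ x →
      0 ≤ Real.cos x - (1 + (-1/2)*x^2 + (1/24)*x^4 + (-1/720)*x^6 + 0*x^8) := by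
    apply aux_nonneg (g := fun y : ℝ =>
      -Real.sin y - (2*(-1/2)*y + 4*(1/24)*y^3 + 6*(-1/720)*y^5 + 8*0*y^7))
    · norm_num
    · intro y; exact (Real.hasDerivAt_cos y).sub (hasDerivAt_poly8 1 (-1/2) (1/24) (-1/720) 0 y)
    · intro y hy; nlinarith [s5 y hy]
  -- sin x ≥ x - x³/6 + x⁵/120 - x⁷/5040
  have s7 : ∀ x : ℝ, 0 ≤ x →
      0 ≤ Real.sin x - (1*x + (-1/6)*x^3 + (1/120)*x^5 + (-1/5040)*x^7 + 0*x^9) := by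
    apply aux_nonneg (g := fun y : ℝ =>
      Real.cos y - (1 + 3*(-1/6)*y^2 + 5*(1/120)*y^4 + 7*(-1/5040)*y^6 + 9*0*y^8))
    · norm_num
    · intro y; exact (Real.hasDerivAt_sin y).sub (hasDerivAt_poly9 1 (-1/6) (1/120) (-1/5040) 0 y)
    · intro y hy; nlinarith [c6 y hy]
  -- cos x ≤ 1 - x²/2 + x⁴/24 - x⁶/720 + x⁸/40320
  have c8 : ∀ x : ℝ, 0 ≤ x →
      0 ≤ (1 + (-1/2)*x^2 + (1/24)*x^4 + (-1/720)*x^6 + (1/40320)*x^8) - Real.cos x := by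
    apply aux_nonneg (g := fun y : ℝ =>
      (2*(-1/2)*y + 4*(1/24)*y^3 + 6*(-1/720)*y^5 + 8*(1/40320)*y^7) - -Real.sin y)
    · norm_num
    · intro y
      exact (hasDerivAt_poly8 1 (-1/2) (1/24) (-1/720) (1/40320) y).sub (Real.hasDerivAt_cos y)
    · intro y hy; nlinarith [s7 y hy]
  -- sin x ≤ x - x³/6 + x⁵/120 - x⁷/5040 + x⁹/362880
  have s9 : ∀ x : ℝ, 0 ≤ x →
      0 ≤ (1*x + (-1/6)*x^3 + (1/120)*x^5 + (-1/5040)*x^7 + (1/362880)*x^9) - Real.sin x := by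
    apply aux_nonneg (g := fun y : ℝ =>
      (1 + 3*(-1/6)*y^2 + 5*(1/120)*y^4 + 7*(-1/5040)*y^6 + 9*(1/362880)*y^8) - Real.cos y)
    · norm_num
    · intro y
      exact (hasDerivAt_poly9 1 (-1/6) (1/120) (-1/5040) (1/362880) y).sub (Real.hasDerivAt_sin y)
    · intro y hy; nlinarith [c8 y hy]
  intro x hx
  nlinarith [s9 x hx]

private lemma hasDerivAt_expneg (t : ℝ) :
    HasDerivAt (fun y : ℝ => Real.exp (-y)) (Real.exp (-t) * (-1)) t := by
  simpa using (HasDerivAt.exp (hasDerivAt_neg t))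

/-- quintic lower bound for exp(-t) on [0, ∞) -/
private lemma expneg_lower5 : ∀ t : ℝ, 0 ≤ t →
    1 - t + t^2/2 - t^3/6 + t^4/24 - t^5/120 ≤ Real.exp (-t) := by
  have e1 : ∀ t : ℝ, 0 ≤ t → 1 - t ≤ Real.exp (-t) := by
    intro t _
    have := Real.add_one_le_exp (-t)
    linarith
  have e2 : ∀ t : ℝ, 0 ≤ t →
      0 ≤ (1 + (-1)*t + (1/2)*t^2 + 0*t^3 + 0*t^4 + 0*t^5) - Real.exp (-t) := by
    apply aux_nonneg (g := fun y : ℝ =>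
      ((-1) + 2*(1/2)*y + 3*0*y^2 + 4*0*y^3 + 5*0*y^4) - Real.exp (-y) * (-1))
    · norm_num
    · intro y; exact (hasDerivAt_poly5 1 (-1) (1/2) 0 0 0 y).sub (hasDerivAt_expneg y)
    · intro y hy; nlinarith [e1 y hy]
  have e3 : ∀ t : ℝ, 0 ≤ t →
      0 ≤ Real.exp (-t) - (1 + (-1)*t + (1/2)*t^2 + (-1/6)*t^3 + 0*t^4 + 0*t^5) := by
    apply aux_nonneg (g := fun y : ℝ =>
      Real.exp (-y) * (-1) - ((-1) + 2*(1/2)*y + 3*(-1/6)*y^2 + 4*0*y^3 + 5*0*y^4))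
    · norm_num
    · intro y; exact (hasDerivAt_expneg y).sub (hasDerivAt_poly5 1 (-1) (1/2) (-1/6) 0 0 y)
    · intro y hy; nlinarith [e2 y hy]
  have e4 : ∀ t : ℝ, 0 ≤ t →
      0 ≤ (1 + (-1)*t + (1/2)*t^2 + (-1/6)*t^3 + (1/24)*t^4 + 0*t^5) - Real.exp (-t) := by
    apply aux_nonneg (g := fun y : ℝ =>
      ((-1) + 2*(1/2)*y + 3*(-1/6)*y^2 + 4*(1/24)*y^3 + 5*0*y^4) - Real.exp (-y) * (-1))
    · norm_num
    · intro y; exact (hasDerivAt_poly5 1 (-1) (1/2) (-1/6) (1/24) 0 y).sub (hasDerivAt_expneg y)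
    · intro y hy; nlinarith [e3 y hy]
  have e5 : ∀ t : ℝ, 0 ≤ t →
      0 ≤ Real.exp (-t) - (1 + (-1)*t + (1/2)*t^2 + (-1/6)*t^3 + (1/24)*t^4 + (-1/120)*t^5) := by
    apply aux_nonneg (g := fun y : ℝ =>
      Real.exp (-y) * (-1) - ((-1) + 2*(1/2)*y + 3*(-1/6)*y^2 + 4*(1/24)*y^3 + 5*(-1/120)*y^4))
    · norm_num
    · intro y
      exact (hasDerivAt_expneg y).sub (hasDerivAt_poly5 1 (-1) (1/2) (-1/6) (1/24) (-1/120) y)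
    · intro y hy; nlinarith [e4 y hy]
  intro t ht
  nlinarith [e5 t ht]

theorem sinc_le_exp (x : ℝ) (h0 : 0 ≤ x) (h1 : x ≤ Real.pi) :
    (if x = 0 then (1:ℝ) else Real.sin x / x) ≤ Real.exp (-x ^ 2 / 6) := by
  rcases eq_or_lt_of_le h0 with h | hx
  · simp [← h]
  rw [if_neg hx.ne']
  rw [div_le_iff₀ hx]
  have hs := sin_upper9 x h0
  have ht : (0:ℝ) ≤ x^2/6 := by positivity
  have he := expneg_lower5 (x^2/6) ht
  have hpi : x^2 ≤ 9.9225 := by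
    nlinarith [Real.pi_lt_d2]
  have key : x - x^3/6 + x^5/120 - x^7/5040 + x^9/362880 ≤
      (1 - x^2/6 + (x^2/6)^2/2 - (x^2/6)^3/6 + (x^2/6)^4/24 - (x^2/6)^5/120) * x := by
    nlinarith [sq_nonneg x, sq_nonneg (x^2 - 8.75), mul_pos hx hx,
      mul_nonneg (mul_nonneg h0 h0) h0,
      mul_nonneg (sub_nonneg.2 hpi) (mul_nonneg (mul_nonneg h0 h0) (mul_nonneg h0 h0)),
      mul_nonneg (mul_nonneg (sub_nonneg.2 hpi) (sq_nonneg (x^2 - 8.75))) h0,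
      mul_nonneg (mul_nonneg (sub_nonneg.2 hpi) (sq_nonneg (x^2 - 8.75))) (mul_nonneg (mul_nonneg h0 h0) h0)]
  have hexp : Real.exp (-(x^2/6)) = Real.exp (-x^2/6) := by ring_nf
  calc Real.sin x ≤ x - x^3/6 + x^5/120 - x^7/5040 + x^9/362880 := hs
    _ ≤ (1 - x^2/6 + (x^2/6)^2/2 - (x^2/6)^3/6 + (x^2/6)^4/24 - (x^2/6)^5/120) * x := key
    _ ≤ Real.exp (-x^2/6) * x := by
        rw [← hexp]
        exact mul_le_mul_of_nonneg_right he h0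
end

section
/- For s ≥ 4, the integral ∫_{-∞}^{∞} |sin(πx)/(πx)|^s dx is strictly less than √(2/s). -/
open Real MeasureTheory

lemma mono_aux {f f' : ℝ → ℝ} (hc : ContinuousOn f (Set.Ici 0))
    (hd : ∀ x ∈ Set.Ioi (0:ℝ), HasDerivAt f (f' x) x)
    (h0 : ∀ x ∈ Set.Ioi (0:ℝ), 0 ≤ f' x) {t : ℝ} (ht : 0 ≤ t) : f 0 ≤ f t := by
  have := monotoneOn_of_hasDerivWithinAt_nonneg (convex_Ici 0) hc
    (f' := f') (by
      intro x hx
      rw [interior_Ici] at hx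
      exact (hd x hx).hasDerivWithinAt) (by
      intro x hx
      rw [interior_Ici] at hx
      exact h0 x hx)
  exact this Set.self_mem_Ici ht ht

lemma sin_ge_cubic (t : ℝ) (ht : 0 ≤ t) : t - t^3/6 ≤ Real.sin t := by
  have h := mono_aux (f := fun x => Real.sin x - (x - x^3/6))
    (f' := fun x => Real.cos x - (1 - x^2/2))
    (by fun_prop)
    (fun x _ => by
      have : HasDerivAt (fun x : ℝ => Real.sin x - (x - x^3/6))
          (Real.cos x - (1 - ((3:ℕ):ℝ) * x^2/6)) x := by
        exact (Real.hasDerivAt_sin x).sub ((hasDerivAt_id x).sub (((hasDerivAt_pow 3 x)).div_const 6))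
      convert this using 1
      push_cast
      ring)
    (fun x _ => by nlinarith [Real.one_sub_sq_div_two_le_cos (x := x)])
    ht
  simp at h
  linarith

lemma cos_le_quartic (t : ℝ) (ht : 0 ≤ t) : Real.cos t ≤ 1 - t^2/2 + t^4/24 := by
  have h := mono_aux (f := fun x => 1 - x^2/2 + x^4/24 - Real.cos x)
    (f' := fun x => Real.sin x - (x - x^3/6))
    (by fun_prop)
    (fun x _ => by
      have : HasDerivAt (fun x : ℝ => 1 - x^2/2 + x^4/24 - Real.cos x)
          (0 - ((2:ℕ):ℝ) * x^1/2 + ((4:ℕ):ℝ) * x^3/24 - (-Real.sin x)) x := by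
        exact (((hasDerivAt_const x (1:ℝ)).sub ((hasDerivAt_pow 2 x).div_const 2)).add
          ((hasDerivAt_pow 4 x).div_const 24)).sub (Real.hasDerivAt_cos x)
      convert this using 1
      push_cast
      ring)
    (fun x hx => by have := sin_ge_cubic x (le_of_lt hx); linarith)
    ht
  simp at h
  linarith

lemma sin_le_quintic (t : ℝ) (ht : 0 ≤ t) : Real.sin t ≤ t - t^3/6 + t^5/120 := by
  have h := mono_aux (f := fun x => x - x^3/6 + x^5/120 - Real.sin x)
    (f' := fun x => 1 - x^2/2 + x^4/24 - Real.cos x)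
    (by fun_prop)
    (fun x _ => by
      have : HasDerivAt (fun x : ℝ => x - x^3/6 + x^5/120 - Real.sin x)
          (1 - ((3:ℕ):ℝ) * x^2/6 + ((5:ℕ):ℝ) * x^4/120 - Real.cos x) x := by
        exact (((hasDerivAt_id x).sub ((hasDerivAt_pow 3 x).div_const 6)).add
          ((hasDerivAt_pow 5 x).div_const 120)).sub (Real.hasDerivAt_sin x)
      convert this using 1
      push_cast
      ring)
    (fun x hx => by have := cos_le_quartic x (le_of_lt hx); linarith)
    ht
  simp at h
  linarith

lemma exp_neg_le_quad (u : ℝ) (hu : 0 ≤ u) : Real.exp (-u) ≤ 1 - u + u^2/2 := by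
  have h := mono_aux (f := fun x => 1 - x + x^2/2 - Real.exp (-x))
    (f' := fun x => Real.exp (-x) - (1 - x))
    (by fun_prop)
    (fun x _ => by
      have : HasDerivAt (fun x : ℝ => 1 - x + x^2/2 - Real.exp (-x))
          (0 - 1 + ((2:ℕ):ℝ) * x^1/2 - (Real.exp (-x) * (-1))) x := by
        exact (((hasDerivAt_const x (1:ℝ)).sub (hasDerivAt_id x)).add
          ((hasDerivAt_pow 2 x).div_const 2)).sub
          ((Real.hasDerivAt_exp (-x)).comp x ((hasDerivAt_id x).neg))
      convert this using 1
      push_cast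
      ring)
    (fun x _ => by have := Real.add_one_le_exp (-x); nlinarith [Real.exp_pos (-x)])
    hu
  simp at h
  linarith

lemma exp_neg_ge_cubic (u : ℝ) (hu : 0 ≤ u) : 1 - u + u^2/2 - u^3/6 ≤ Real.exp (-u) := by
  have h := mono_aux (f := fun x => Real.exp (-x) - (1 - x + x^2/2 - x^3/6))
    (f' := fun x => (1 - x + x^2/2) - Real.exp (-x))
    (by fun_prop)
    (fun x _ => by
      have : HasDerivAt (fun x : ℝ => Real.exp (-x) - (1 - x + x^2/2 - x^3/6))
          ((Real.exp (-x) * (-1)) - (0 - 1 + ((2:ℕ):ℝ) * x^1/2 - ((3:ℕ):ℝ) * x^2/6)) x := by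
        exact ((Real.hasDerivAt_exp (-x)).comp x ((hasDerivAt_id x).neg)).sub
          ((((hasDerivAt_const x (1:ℝ)).sub (hasDerivAt_id x)).add
            ((hasDerivAt_pow 2 x).div_const 2)).sub ((hasDerivAt_pow 3 x).div_const 6))
      convert this using 1
      push_cast
      ring)
    (fun x hx => by have := exp_neg_le_quad x (le_of_lt hx); linarith)
    hu
  simp at h
  linarith

lemma sin_le_mul_exp {t : ℝ} (ht : 0 ≤ t) (ht' : t ≤ 2.6) :
    Real.sin t ≤ t * Real.exp (-(t^2/6)) := by
  have h1 := sin_le_quintic t ht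
  have h2 := exp_neg_ge_cubic (t^2/6) (by positivity)
  have h3 : t * (1 - t^2/6 + (t^2/6)^2/2 - (t^2/6)^3/6) ≤ t * Real.exp (-(t^2/6)) :=
    mul_le_mul_of_nonneg_left h2 ht
  nlinarith [pow_nonneg ht 5, pow_nonneg ht 7, sq_nonneg t,
    mul_le_mul_of_nonneg_left (mul_le_mul ht' ht' ht (by norm_num)) (pow_nonneg ht 5)]

theorem ball_ineq_ge_four (s : ℝ) (hs : 4 ≤ s) :
    (∫ x : ℝ, (if x = 0 then (1:ℝ) else |Real.sin (Real.pi * x) / (Real.pi * x)|) ^ s)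
      < Real.sqrt (2 / s) := by
  have hπ : (0:ℝ) < π := Real.pi_pos
  have hπ3 : (3.141592:ℝ) < π := by have := Real.pi_gt_d6; linarith
  have hπ4 : π < 3.15 := by have := Real.pi_lt_d2; linarith
  have hs0 : (0:ℝ) < s := by linarith
  set c : ℝ := 2.6 / π with hcdef
  have hc0 : 0 < c := by positivity
  set b : ℝ := s * π ^ 2 / 6 with hbdef
  have hb : 0 < b := by positivity
  set F : ℝ → ℝ := fun x => if x = 0 then (1:ℝ) else |Real.sin (π * x) / (π * x)| with hFdef
  set B : ℝ → ℝ := Set.indicator (Set.Ioi c) (fun t => (π * t) ^ (-s)) with hBdef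
  have hB0 : ∀ y, 0 ≤ B y := fun y =>
    Set.indicator_nonneg (fun t ht => Real.rpow_nonneg (le_of_lt (mul_pos hπ (hc0.trans ht))) _) y
  have hF0 : ∀ x, 0 ≤ F x := fun x => by
    by_cases hx : x = 0 <;> simp [hFdef, hx, abs_nonneg]
  -- pointwise bound
  have key : ∀ x : ℝ, F x ^ s ≤ Real.exp (-b * x^2) + (B x + B (-x)) := by
    intro x
    rcases le_or_gt |x| c with h | h
    · have hFle : F x ≤ Real.exp (-(π^2/6) * x^2) := by
        rcases eq_or_ne x 0 with rfl | hx
        · simp [hFdef]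
        · have habs : 0 < |x| := abs_pos.mpr hx
          have ht0 : 0 < π * |x| := mul_pos hπ habs
          have ht26 : π * |x| ≤ 2.6 := by
            rw [hcdef] at h
            rw [mul_comm]
            exact (le_div_iff₀ hπ).mp h
          have hsin_nonneg : 0 ≤ Real.sin (π * |x|) :=
            Real.sin_nonneg_of_nonneg_of_le_pi ht0.le (by nlinarith)
          have habs2 : |Real.sin (π * x)| = Real.sin (π * |x|) := by
            rcases abs_cases x with ⟨hx1, _⟩ | ⟨hx1, _⟩
            · rw [hx1] at hsin_nonneg ⊢
              exact abs_of_nonneg hsin_nonneg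
            · rw [hx1] at hsin_nonneg ⊢
              rw [show π * -x = -(π * x) by ring, Real.sin_neg] at hsin_nonneg ⊢
              exact abs_of_nonpos (by linarith)
          have hFx : F x = Real.sin (π * |x|) / (π * |x|) := by
            simp only [hFdef, if_neg hx]
            rw [abs_div, abs_mul, abs_of_pos hπ, habs2]
          rw [hFx, div_le_iff₀ ht0]
          calc Real.sin (π * |x|) ≤ (π * |x|) * Real.exp (-((π * |x|)^2/6)) :=
                sin_le_mul_exp ht0.le ht26
            _ = Real.exp (-(π^2/6) * x^2) * (π * |x|) := by
                rw [mul_comm]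
                congr 2
                rw [mul_pow, sq_abs]
                ring
      have h1 : F x ^ s ≤ (Real.exp (-(π^2/6) * x^2)) ^ s :=
        Real.rpow_le_rpow (hF0 x) hFle hs0.le
      have h2 : (Real.exp (-(π^2/6) * x^2)) ^ s = Real.exp (-b * x^2) := by
        rw [← Real.exp_mul]
        congr 1
        rw [hbdef]; ring
      rw [h2] at h1
      linarith [hB0 x, hB0 (-x)]
    · have habs : 0 < |x| := lt_trans hc0 h
      have hx0 : x ≠ 0 := abs_pos.mp habs
      have ht0 : 0 < π * |x| := mul_pos hπ habs
      have hsin1 : |Real.sin (π * x)| ≤ 1 := abs_le.mpr ⟨Real.neg_one_le_sin _, Real.sin_le_one _⟩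
      have hFle : F x ≤ (π * |x|)⁻¹ := by
        simp only [hFdef, if_neg hx0]
        rw [abs_div, abs_mul, abs_of_pos hπ, inv_eq_one_div]
        exact div_le_div₀ zero_le_one hsin1 ht0 le_rfl
      have h1 : F x ^ s ≤ ((π * |x|)⁻¹) ^ s := Real.rpow_le_rpow (hF0 x) hFle hs0.le
      have h2 : ((π * |x|)⁻¹ : ℝ) ^ s = (π * |x|) ^ (-s) := by
        rw [Real.inv_rpow ht0.le, ← Real.rpow_neg ht0.le]
      rw [h2] at h1
      have hexp : 0 < Real.exp (-b * x^2) := Real.exp_pos _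
      rcases abs_cases x with ⟨he, _⟩ | ⟨he, _⟩
      · have hmem : x ∈ Set.Ioi c := by rw [he] at h; exact h
        have hBx : B x = (π * x) ^ (-s) := Set.indicator_of_mem hmem _
        rw [he] at h1
        rw [← hBx] at h1
        linarith [hB0 (-x)]
      · have hmem : -x ∈ Set.Ioi c := by rw [he] at h; exact h
        have hBx : B (-x) = (π * -x) ^ (-s) := Set.indicator_of_mem hmem _
        rw [he] at h1
        rw [← hBx] at h1
        linarith [hB0 x]
  -- integrability
  have hGauss : Integrable (fun x : ℝ => Real.exp (-b * x^2)) := integrable_exp_neg_mul_sq hb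
  have hBint : Integrable B := by
    rw [hBdef, integrable_indicator_iff measurableSet_Ioi]
    have base : IntegrableOn (fun t : ℝ => π ^ (-s) * t ^ (-s)) (Set.Ioi c) :=
      (integrableOn_Ioi_rpow_of_lt (by linarith) hc0).const_mul _
    apply base.congr_fun ?_ measurableSet_Ioi
    intro t ht
    show π ^ (-s) * t ^ (-s) = (π * t) ^ (-s)
    rw [← Real.mul_rpow hπ.le (le_of_lt (hc0.trans ht))]
  have hBneg : Integrable (fun x : ℝ => B (-x)) :=
    ((Measure.measurePreserving_neg (volume : Measure ℝ)).integrable_comp_emb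
      (Homeomorph.neg ℝ).measurableEmbedding).mpr hBint
  -- value of tail integral
  have hBval : (∫ x, B x) = π ^ (-s) * (-c ^ (-s + 1) / (-s + 1)) := by
    rw [hBdef, integral_indicator measurableSet_Ioi]
    rw [setIntegral_congr_fun measurableSet_Ioi
      (g := fun t : ℝ => π ^ (-s) * t ^ (-s))
      (fun t ht => Real.mul_rpow hπ.le (le_of_lt (hc0.trans ht)))]
    rw [MeasureTheory.integral_const_mul, integral_Ioi_rpow_of_lt (by linarith) hc0]
  -- assemble
  set d : ℝ := π ^ (-s) * (-c ^ (-s + 1) / (-s + 1)) with hddef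
  have hstep : (∫ x : ℝ, F x ^ s) ≤ Real.sqrt (π / b) + (d + d) := by
    calc (∫ x : ℝ, F x ^ s)
        ≤ ∫ x : ℝ, (Real.exp (-b * x^2) + (B x + B (-x))) :=
          integral_mono_of_nonneg (Filter.Eventually.of_forall fun x => Real.rpow_nonneg (hF0 x) s)
            (hGauss.add (hBint.add hBneg)) (Filter.Eventually.of_forall key)
      _ = (∫ x : ℝ, Real.exp (-b * x^2)) + (∫ x : ℝ, (B x + B (-x))) :=
          integral_add hGauss (hBint.add hBneg)
      _ = (∫ x : ℝ, Real.exp (-b * x^2)) + ((∫ x : ℝ, B x) + (∫ x : ℝ, B (-x))) := by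
          rw [integral_add hBint hBneg]
      _ = Real.sqrt (π / b) + (d + d) := by
          rw [integral_gaussian, integral_neg_eq_self B volume, hBval]
  -- numeric estimates
  have hsqs : 0 < Real.sqrt s := Real.sqrt_pos.mpr hs0
  -- 2.6^(s-4) ≥ √s / 2
  have hlog : (1/4 : ℝ) ≤ Real.log 2.6 := by
    rw [Real.le_log_iff_exp_le (by norm_num)]
    have h4 : Real.exp (1/4) ^ (4:ℕ) = Real.exp 1 := by
      rw [← Real.exp_nat_mul]; norm_num
    have h5 : Real.exp (1/4) ^ (4:ℕ) < (2.6:ℝ) ^ (4:ℕ) := by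
      rw [h4]
      calc Real.exp 1 < 2.7182818286 := Real.exp_one_lt_d9
        _ < (2.6:ℝ) ^ (4:ℕ) := by norm_num
    exact (lt_of_pow_lt_pow_left₀ 4 (by norm_num) h5).le
  have h26 : Real.sqrt s / 2 ≤ (2.6:ℝ) ^ (s - 4) := by
    have e1 : Real.sqrt s ≤ s / 2 := by
      rw [show (s/2 : ℝ) = Real.sqrt ((s/2)^2) from (Real.sqrt_sq (by linarith)).symm]
      apply Real.sqrt_le_sqrt
      nlinarith
    have e2 : s / 4 ≤ Real.exp ((1/4) * (s - 4)) := by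
      have := Real.add_one_le_exp ((1/4) * (s - 4)); linarith
    have e3 : Real.exp ((1/4) * (s - 4)) ≤ Real.exp (Real.log 2.6 * (s - 4)) :=
      Real.exp_le_exp.mpr (mul_le_mul_of_nonneg_right hlog (by linarith))
    have e4 : (2.6:ℝ) ^ (s - 4) = Real.exp (Real.log 2.6 * (s - 4)) :=
      Real.rpow_def_of_pos (by norm_num) _
    rw [e4]
    linarith
  -- bound d
  have hd : d ≤ 0.01213 / Real.sqrt s := by
    have h1 : -c ^ (-s + 1) / (-s + 1) = c ^ (-s + 1) / (s - 1) := by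
      rw [div_eq_div_iff (by linarith) (by linarith)]
      ring
    have h2 : c ^ (-s + 1) = (2.6:ℝ) ^ (-s + 1) / π ^ (-s + 1) := by
      rw [hcdef, Real.div_rpow (by norm_num) hπ.le]
    have h3 : π ^ (-s) / π ^ (-s + 1) = π⁻¹ := by
      rw [← Real.rpow_sub hπ, show (-s - (-s + 1) : ℝ) = -1 by ring, Real.rpow_neg_one]
    have h4 : d = π⁻¹ * ((2.6:ℝ) ^ (-s + 1) / (s - 1)) := by
      rw [hddef, h1, h2]
      rw [show π ^ (-s) * ((2.6:ℝ) ^ (-s+1) / π ^ (-s+1) / (s-1))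
          = (π ^ (-s) / π ^ (-s+1)) * ((2.6:ℝ) ^ (-s+1) / (s-1)) by ring, h3]
    have h5 : (2.6:ℝ) ^ (-s + 1) ≤ (1/17.576) * (2 / Real.sqrt s) := by
      have e1 : (2.6:ℝ) ^ (-s + 1) = (2.6:ℝ) ^ (-3:ℝ) * (2.6:ℝ) ^ (-s + 4) := by
        rw [← Real.rpow_add (by norm_num)]
        congr 1
        ring
      have e2 : (2.6:ℝ) ^ (-3:ℝ) = 1/17.576 := by
        rw [show (-3:ℝ) = -((3:ℕ):ℝ) by norm_num, Real.rpow_neg (by norm_num),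
          Real.rpow_natCast]
        norm_num
      have e3 : (2.6:ℝ) ^ (-s + 4) ≤ 2 / Real.sqrt s := by
        rw [show (-s + 4 : ℝ) = -(s - 4) by ring, Real.rpow_neg (by norm_num)]
        rw [show (2 / Real.sqrt s : ℝ) = (Real.sqrt s / 2)⁻¹ by rw [inv_div]]
        exact inv_anti₀ (by positivity) h26
      rw [e1, e2]
      have : (0:ℝ) ≤ 1/17.576 := by norm_num
      nlinarith [Real.rpow_nonneg (show (0:ℝ) ≤ 2.6 by norm_num) (-s+4)]
    rw [h4]
    have h6 : π⁻¹ * ((2.6:ℝ) ^ (-s + 1) / (s - 1)) ≤ (3.141592:ℝ)⁻¹ * (((1/17.576) * (2 / Real.sqrt s)) / 3) := by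
      apply mul_le_mul
      · exact inv_anti₀ (by norm_num) hπ3.le
      · apply div_le_div₀ (by positivity) h5 (by norm_num) (by linarith)
      · apply div_nonneg (Real.rpow_nonneg (by norm_num) _) (by linarith)
      · norm_num
    calc π⁻¹ * ((2.6:ℝ) ^ (-s + 1) / (s - 1))
        ≤ (3.141592:ℝ)⁻¹ * (((1/17.576) * (2 / Real.sqrt s)) / 3) := h6
      _ = (2 / (3.141592 * 17.576 * 3)) / Real.sqrt s := by ring
      _ ≤ 0.01213 / Real.sqrt s := by
          gcongr
          norm_num
  -- gaussian value
  have hgv : Real.sqrt (π / b) = Real.sqrt (6 / π) / Real.sqrt s := by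
    rw [show π / b = (6 / π) / s by rw [hbdef]; field_simp]
    exact Real.sqrt_div (by positivity) s
  have hg1 : Real.sqrt (6 / π) ≤ 1.3821 := by
    rw [show (1.3821:ℝ) = Real.sqrt (1.3821^2) from (Real.sqrt_sq (by norm_num)).symm]
    apply Real.sqrt_le_sqrt
    rw [div_le_iff₀ hπ]
    nlinarith
  have hg2 : (1.4142:ℝ) ≤ Real.sqrt 2 := by
    rw [show (1.4142:ℝ) = Real.sqrt (1.4142^2) from (Real.sqrt_sq (by norm_num)).symm]
    apply Real.sqrt_le_sqrt
    norm_num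
  have hfin : Real.sqrt (2 / s) = Real.sqrt 2 / Real.sqrt s := Real.sqrt_div (by norm_num) s
  show (∫ x : ℝ, F x ^ s) < Real.sqrt (2 / s)
  calc (∫ x : ℝ, F x ^ s) ≤ Real.sqrt (π / b) + (d + d) := hstep
    _ ≤ 1.3821 / Real.sqrt s + (0.01213 / Real.sqrt s + 0.01213 / Real.sqrt s) := by
        rw [hgv]
        gcongr
    _ = 1.40636 / Real.sqrt s := by ring
    _ < 1.4142 / Real.sqrt s := by gcongr <;> norm_num
    _ ≤ Real.sqrt 2 / Real.sqrt s := by gcongr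
    _ = Real.sqrt (2 / s) := hfin.symm
end

section
/- For any fixed constant c > -1, if β = α - c, then lim_{α→∞} α^{(c+1)/2} ∫_{ℝ} |sin t|^α / |t|^{α-c} dt = 6^{(c+1)/2} Γ((c+1)/2). -/
open Real MeasureTheory Filter
open Set Topology


lemma aux_sin_ge {x : ℝ} (hx : 0 ≤ x) : x - x^3/6 ≤ Real.sin x := by
  have h : Monotone (fun x : ℝ => Real.sin x - (x - x^3/6)) := by
    apply monotone_of_hasDerivAt_nonneg (f' := fun x => Real.cos x - (1 - x^2/2))
    · intro x
      have h1 : HasDerivAt (fun x : ℝ => x - x^3/6) (1 - x^2/2) x := by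
        have := ((hasDerivAt_id x).sub (((hasDerivAt_pow 3 x)).div_const 6))
        exact this.congr_deriv (by norm_num; ring)
      exact (Real.hasDerivAt_sin x).sub h1
    · intro x
      simp only [Pi.zero_apply, sub_nonneg]
      exact Real.one_sub_sq_div_two_le_cos
  have := h hx
  simpa using this

lemma aux_cos_le {x : ℝ} (hx : 0 ≤ x) : Real.cos x ≤ 1 - x^2/2 + x^4/24 := by
  have h : MonotoneOn (fun x : ℝ => (1 - x^2/2 + x^4/24) - Real.cos x) (Ici 0) := by
    apply monotoneOn_of_hasDerivWithinAt_nonneg (convex_Ici 0)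
      (f' := fun x => (Real.sin x - (x - x^3/6)))
    · fun_prop
    · intro x _
      apply HasDerivAt.hasDerivWithinAt
      have h1 : HasDerivAt (fun x : ℝ => 1 - x^2/2 + x^4/24) (-x + x^3/6) x := by
        have := (((hasDerivAt_const x (1:ℝ)).sub ((hasDerivAt_pow 2 x).div_const 2)).add
          ((hasDerivAt_pow 4 x).div_const 24))
        exact this.congr_deriv (by norm_num; ring)
      have := h1.sub (Real.hasDerivAt_cos x)
      exact this.congr_deriv (by ring)
    · intro x hx
      rw [interior_Ici] at hx
      exact sub_nonneg.2 (aux_sin_ge hx.le)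
  have := h (self_mem_Ici) hx hx
  simpa using this

lemma aux_sin_le {x : ℝ} (hx : 0 ≤ x) : Real.sin x ≤ x - x^3/6 + x^5/120 := by
  have h : MonotoneOn (fun x : ℝ => (x - x^3/6 + x^5/120) - Real.sin x) (Ici 0) := by
    apply monotoneOn_of_hasDerivWithinAt_nonneg (convex_Ici 0)
      (f' := fun x => (1 - x^2/2 + x^4/24) - Real.cos x)
    · fun_prop
    · intro x _
      apply HasDerivAt.hasDerivWithinAt
      have h1 : HasDerivAt (fun x : ℝ => x - x^3/6 + x^5/120) (1 - x^2/2 + x^4/24) x := by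
        have := (((hasDerivAt_id x).sub ((hasDerivAt_pow 3 x).div_const 6)).add
          ((hasDerivAt_pow 5 x).div_const 120))
        exact this.congr_deriv (by norm_num; ring)
      exact h1.sub (Real.hasDerivAt_sin x)
    · intro x hx
      rw [interior_Ici] at hx
      exact sub_nonneg.2 (aux_cos_le hx.le)
  have := h (self_mem_Ici) hx hx
  simpa using this



lemma aux_L_tendsto :
    Tendsto (fun u : ℝ => Real.log (Real.sin u / u) / u^2) (𝓝[>] 0) (𝓝 (-(1/6))) := by
  have hmem : Ioo (0:ℝ) 1 ∈ 𝓝[>] (0:ℝ) := Ioo_mem_nhdsGT_of_mem (by norm_num)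
  have hlow : Tendsto (fun u : ℝ => (-(1/6)) / (1 - u^2/6)) (𝓝[>] 0) (𝓝 (-(1/6))) := by
    have : Tendsto (fun u : ℝ => (-(1/6)) / (1 - u^2/6)) (𝓝 0) (𝓝 (-(1/6))) := by
      have hca : ContinuousAt (fun u : ℝ => (-(1/6)) / (1 - u^2/6)) 0 := by
        apply ContinuousAt.div
        · fun_prop
        · fun_prop
        · norm_num
      simpa using hca.tendsto
    exact this.mono_left nhdsWithin_le_nhds
  have hup : Tendsto (fun u : ℝ => -(1/6) + u^2/120) (𝓝[>] 0) (𝓝 (-(1/6))) := by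
    have : Tendsto (fun u : ℝ => -(1/6) + u^2/120) (𝓝 0) (𝓝 (-(1/6))) := by
      have := (tendsto_const_nhds (x := (-(1/6):ℝ))).add
        (((continuous_pow 2).div_const 120).tendsto 0)
      simpa using this
    exact this.mono_left nhdsWithin_le_nhds
  refine tendsto_of_tendsto_of_tendsto_of_le_of_le' hlow hup ?_ ?_
  · filter_upwards [hmem] with u hu
    obtain ⟨h0, h1⟩ := hu
    have hu2 : (0:ℝ) < u^2 := by positivity
    set t := Real.sin u / u with ht
    have ht1 : 1 - u^2/6 ≤ t := by
      rw [ht, le_div_iff₀ h0]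
      have := aux_sin_ge h0.le
      nlinarith
    have ht2 : t ≤ 1 := by
      rw [ht, div_le_one h0]
      exact (Real.sin_lt h0).le
    have htpos : 0 < t := by nlinarith
    have hden : 0 < 1 - u^2/6 := by nlinarith
    have hlog : 1 - t⁻¹ ≤ Real.log t := by
      have := Real.log_le_sub_one_of_pos (inv_pos.2 htpos)
      rw [Real.log_inv] at this
      linarith
    rw [div_le_div_iff₀ hden hu2]
    have h1t : t⁻¹ ≤ (1 - u^2/6)⁻¹ := by
      exact inv_anti₀ hden ht1
    have hlog2 : 1 - (1 - u^2/6)⁻¹ ≤ Real.log t := le_trans (by linarith) hlog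
    have hinv : (1 - u^2/6)⁻¹ ≤ 1 + u^2/5 := by
      rw [inv_le_iff_one_le_mul₀ hden]
      have h2 : u^2 ≤ 1 := by nlinarith
      have hu4 : u^4 ≤ u^2 := by nlinarith [mul_le_mul_of_nonneg_right h2 (sq_nonneg u)]
      nlinarith
    have hlog3 : -(u^2/5) ≤ Real.log t := by
      have : 1 - (1 + u^2/5) ≤ 1 - (1 - u^2/6)⁻¹ := by linarith
      linarith
    -- goal : -(1/6) * u^2 ≤ log t * (1 - u^2/6)
    have hkey := mul_le_mul_of_nonneg_right hlog2 hden.le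
    have hid : (1 - (1 - u^2/6)⁻¹) * (1 - u^2/6) = -(u^2/6) := by
      rw [sub_mul, one_mul, inv_mul_cancel₀ hden.ne']
      ring
    linarith [hkey, hid.symm.le]
  · filter_upwards [hmem] with u hu
    obtain ⟨h0, h1⟩ := hu
    have hu2 : (0:ℝ) < u^2 := by positivity
    set t := Real.sin u / u with ht
    have ht2 : t ≤ 1 - u^2/6 + u^4/120 := by
      rw [ht, div_le_iff₀ h0]
      have := aux_sin_le h0.le
      nlinarith
    have ht1 : 1 - u^2/6 ≤ t := by
      rw [ht, le_div_iff₀ h0]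
      nlinarith [aux_sin_ge h0.le]
    have htpos : 0 < t := by nlinarith
    have hlog : Real.log t ≤ t - 1 := Real.log_le_sub_one_of_pos htpos
    rw [div_le_iff₀ hu2]
    nlinarith



noncomputable def Gfun (c α s : ℝ) : ℝ :=
  (Real.sqrt α * |Real.sin (s / Real.sqrt α)|) ^ α / |s| ^ (α - c)

lemma G_eq (c : ℝ) {α s : ℝ} (hα : 0 < α) (hs : s ≠ 0) :
    Gfun c α s = |s| ^ c * (Real.sqrt α * |Real.sin (s / Real.sqrt α)| / |s|) ^ α := by
  have habs : (0:ℝ) < |s| := abs_pos.2 hs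
  rw [Gfun, Real.div_rpow (by positivity) (abs_nonneg s), Real.rpow_sub habs]
  rw [div_div_eq_mul_div]
  ring

lemma point_eq (c : ℝ) {α : ℝ} (hα : 0 < α) (s : ℝ) :
    α ^ (c/2) * (|Real.sin ((Real.sqrt α)⁻¹ * s)| ^ α / |(Real.sqrt α)⁻¹ * s| ^ (α - c))
      = Gfun c α s := by
  have hsq : 0 < Real.sqrt α := Real.sqrt_pos.2 hα
  rcases eq_or_ne s 0 with rfl | hs
  · simp [Gfun, Real.zero_rpow hα.ne']
  · have habs : (0:ℝ) < |s| := abs_pos.2 hs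
    rw [Gfun]
    have h1 : |(Real.sqrt α)⁻¹ * s| = (Real.sqrt α)⁻¹ * |s| := by
      rw [abs_mul, abs_of_pos (inv_pos.2 hsq)]
    rw [h1, Real.mul_rpow (inv_pos.2 hsq).le (abs_nonneg s),
      Real.mul_rpow hsq.le (abs_nonneg _), Real.inv_rpow hsq.le]
    have h2 : (Real.sqrt α)⁻¹ * s = s / Real.sqrt α := by ring
    rw [h2]
    have h4 : α ^ (c/2) * (Real.sqrt α) ^ (α - c) = Real.sqrt α ^ α := by
      rw [Real.sqrt_eq_rpow, ← Real.rpow_mul hα.le, ← Real.rpow_mul hα.le,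
        ← Real.rpow_add hα]
      ring_nf
    field_simp
    rw [← h4]
    ring

lemma sub_eq (c : ℝ) {α : ℝ} (hα : 0 < α) :
    α ^ ((c + 1)/2) * ∫ t : ℝ, |Real.sin t| ^ α / |t| ^ (α - c)
      = ∫ s : ℝ, Gfun c α s := by
  have hsq : 0 < Real.sqrt α := Real.sqrt_pos.2 hα
  have h := MeasureTheory.Measure.integral_comp_mul_left
    (fun t : ℝ => |Real.sin t| ^ α / |t| ^ (α - c)) (Real.sqrt α)⁻¹
  rw [inv_inv, abs_of_pos hsq, smul_eq_mul] at h
  -- h : ∫ x, f ((√α)⁻¹ * x) = √α * ∫ t, f t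
  have h2 : ∫ t : ℝ, |Real.sin t| ^ α / |t| ^ (α - c)
      = (Real.sqrt α)⁻¹ * ∫ x : ℝ, |Real.sin ((Real.sqrt α)⁻¹ * x)| ^ α
          / |(Real.sqrt α)⁻¹ * x| ^ (α - c) := by
    rw [h, ← mul_assoc, inv_mul_cancel₀ hsq.ne', one_mul]
  rw [h2, ← mul_assoc]
  have h3 : α ^ ((c + 1)/2) * (Real.sqrt α)⁻¹ = α ^ (c/2) := by
    rw [Real.sqrt_eq_rpow, ← Real.rpow_neg_one (α ^ ((1:ℝ)/2)), ← Real.rpow_mul hα.le,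
      ← Real.rpow_add hα]
    ring_nf
  rw [h3, ← MeasureTheory.integral_const_mul]
  exact MeasureTheory.integral_congr_ae (Filter.Eventually.of_forall (fun s => point_eq c hα s))

lemma G_tendsto (c : ℝ) {s : ℝ} (hs : s ≠ 0) :
    Tendsto (fun α => Gfun c α s) atTop (𝓝 (|s| ^ c * Real.exp (-(1/6) * s^2))) := by
  have habs : (0:ℝ) < |s| := abs_pos.2 hs
  set u : ℝ → ℝ := fun α => |s| / Real.sqrt α with hu_def
  have hsqrt_top : Tendsto Real.sqrt atTop atTop := by
    have h := tendsto_rpow_atTop (by norm_num : (0:ℝ) < 1/2)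
    refine h.congr' ?_
    filter_upwards [eventually_ge_atTop (0:ℝ)] with x hx
    rw [Real.sqrt_eq_rpow]
  have hu_pos : ∀ᶠ α in atTop, u α ∈ Ioi (0:ℝ) := by
    filter_upwards [eventually_gt_atTop (0:ℝ)] with α hα
    exact div_pos habs (Real.sqrt_pos.2 hα)
  have hu0 : Tendsto u atTop (𝓝 0) := by
    have h1 : Tendsto (fun α => (Real.sqrt α)⁻¹) atTop (𝓝 0) :=
      hsqrt_top.inv_tendsto_atTop
    have h2 := h1.const_mul |s|
    simpa [hu_def, div_eq_mul_inv, mul_comm] using h2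
  have hu : Tendsto u atTop (𝓝[>] 0) :=
    tendsto_nhdsWithin_iff.2 ⟨hu0, hu_pos⟩
  have key : Tendsto (fun α => Real.log (Real.sin (u α) / u α) / (u α)^2) atTop
      (𝓝 (-(1/6))) := aux_L_tendsto.comp hu
  have key2 : Tendsto (fun α => |s| ^ c * Real.exp
      (s^2 * (Real.log (Real.sin (u α) / u α) / (u α)^2))) atTop
      (𝓝 (|s| ^ c * Real.exp (-(1/6) * s^2))) := by
    have h1 := key.const_mul (s^2)
    have h2 := (Real.continuous_exp.tendsto _).comp h1
    have h3 := h2.const_mul (|s| ^ c)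
    have heq : s^2 * -(1/6) = -(1/6) * s^2 := by ring
    rw [heq] at h3
    exact h3
  refine Tendsto.congr' ?_ key2
  filter_upwards [eventually_gt_atTop (0:ℝ), eventually_gt_atTop (s^2)] with α hα hα2
  have hsq : 0 < Real.sqrt α := Real.sqrt_pos.2 hα
  have hupos : 0 < u α := div_pos habs hsq
  have hslt : |s| < Real.sqrt α := by
    have := Real.sqrt_lt_sqrt (sq_nonneg s) hα2
    rwa [Real.sqrt_sq_eq_abs] at this
  have hult1 : u α < 1 := by
    rw [hu_def]
    exact (div_lt_one hsq).2 hslt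
  have hult : u α < π := hult1.trans (by linarith [Real.pi_gt_three])
  have hsin : |Real.sin (s / Real.sqrt α)| = Real.sin (u α) := by
    have habs2 : |s / Real.sqrt α| = u α := by
      rw [abs_div, abs_of_pos hsq]
    rcases le_or_gt 0 (s / Real.sqrt α) with hx | hx
    · have hxe : s / Real.sqrt α = u α := by rw [← habs2, abs_of_nonneg hx]
      rw [hxe, abs_of_nonneg (Real.sin_nonneg_of_nonneg_of_le_pi hupos.le hult.le)]
    · have hxe : -(s / Real.sqrt α) = u α := by rw [← habs2, abs_of_neg hx]
      have : Real.sin (s / Real.sqrt α) = -Real.sin (u α) := by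
        rw [← hxe, Real.sin_neg, neg_neg]
      rw [this, abs_neg, abs_of_nonneg (Real.sin_nonneg_of_nonneg_of_le_pi hupos.le hult.le)]
  have hbase : Real.sqrt α * |Real.sin (s / Real.sqrt α)| / |s| = Real.sin (u α) / u α := by
    rw [hsin, hu_def]
    field_simp
  have hbpos : 0 < Real.sin (u α) / u α :=
    div_pos (Real.sin_pos_of_pos_of_lt_pi hupos hult) hupos
  rw [G_eq c hα hs, hbase, Real.rpow_def_of_pos hbpos]
  congr 1
  have hus : (u α)^2 * α = s^2 := by
    rw [hu_def]
    simp only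
    rw [div_pow, Real.sq_sqrt hα.le, sq_abs]
    field_simp
  rw [← hus]
  field_simp




lemma aux_abs_sin {x : ℝ} (h : |x| ≤ π) : |Real.sin x| = Real.sin |x| := by
  have hs : 0 ≤ Real.sin |x| :=
    Real.sin_nonneg_of_nonneg_of_le_pi (abs_nonneg x) h
  rcases le_or_gt 0 x with hx | hx
  · rw [abs_of_nonneg hx] at *
    exact abs_of_nonneg hs
  · rw [abs_of_neg hx] at *
    rw [Real.sin_neg] at hs ⊢
    exact abs_of_nonpos (by linarith)

lemma G_bound (c A : ℝ) (hA3 : 3 ≤ A) {α : ℝ} (hα : A ≤ α) (s : ℝ) :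
    Gfun c α s ≤ |s| ^ c * Real.exp (-(1/12) * s^2)
      + Set.indicator (Ici (π * Real.sqrt A)) (fun x => A ^ (A/2) * x ^ (c - A)) |s| := by
  have hA0 : (0:ℝ) < A := by linarith
  have hα0 : (0:ℝ) < α := by linarith
  have hsq : 0 < Real.sqrt α := Real.sqrt_pos.2 hα0
  have hind_nonneg : 0 ≤ Set.indicator (Ici (π * Real.sqrt A))
      (fun x => A ^ (A/2) * x ^ (c - A)) |s| := by
    apply Set.indicator_nonneg
    intro x hx
    have hx0 : (0:ℝ) ≤ x := le_trans (by positivity) hx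
    positivity
  rcases eq_or_ne s 0 with rfl | hs
  · have : Gfun c α 0 = 0 := by
      simp [Gfun, Real.zero_rpow hα0.ne']
    rw [this]
    have h1 : (0:ℝ) ≤ |(0:ℝ)| ^ c * Real.exp (-(1/12) * (0:ℝ)^2) := by positivity
    linarith
  have habs : (0:ℝ) < |s| := abs_pos.2 hs
  rw [G_eq c hα0 hs]
  set r := Real.sqrt α * |Real.sin (s / Real.sqrt α)| / |s| with hr_def
  have hr0 : 0 ≤ r := by positivity
  by_cases hπ : |s| < π * Real.sqrt α
  · -- main region
    set u := |s| / Real.sqrt α with hu_def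
    have hupos : 0 < u := div_pos habs hsq
    have hult : u < π := by
      rw [hu_def, div_lt_iff₀ hsq]
      linarith [hπ, mul_comm π (Real.sqrt α)]
    have habs2 : |s / Real.sqrt α| = u := by
      rw [abs_div, abs_of_pos hsq]
    have hsin : |Real.sin (s / Real.sqrt α)| = Real.sin u := by
      rw [aux_abs_sin (by rw [habs2]; exact hult.le), habs2]
    have hbase : r = Real.sin u / u := by
      rw [hr_def, hsin, hu_def]
      field_simp
    have hu10 : u^2 < 10 := by nlinarith [Real.pi_lt_d2]
    have hsinle : Real.sin u ≤ u - u^3/12 := by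
      have h5 := aux_sin_le hupos.le
      have hcube : (0:ℝ) < u^3 := by positivity
      nlinarith
    have h1 : r ≤ Real.exp (-(1/12) * u^2) := by
      rw [hbase]
      have hr1 : Real.sin u / u ≤ 1 - u^2/12 := by
        rw [div_le_iff₀ hupos]
        nlinarith
      have hr2 : 1 - u^2/12 ≤ Real.exp (-(1/12) * u^2) := by
        have := Real.add_one_le_exp (-(1/12) * u^2)
        linarith
      linarith
    have h2 : r ^ α ≤ Real.exp (-(1/12) * s^2) := by
      have h3 := Real.rpow_le_rpow hr0 h1 hα0.le
      rwa [← Real.exp_mul, show -(1/12) * u^2 * α = -(1/12) * (u^2 * α) by ring,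
        show u^2 * α = s^2 by
          rw [hu_def, div_pow, Real.sq_sqrt hα0.le, sq_abs]; field_simp] at h3
    have h4 : |s| ^ c * r ^ α ≤ |s| ^ c * Real.exp (-(1/12) * s^2) :=
      mul_le_mul_of_nonneg_left h2 (by positivity)
    linarith
  · -- tail region
    push_neg at hπ
    have hmem : |s| ∈ Ici (π * Real.sqrt A) := by
      have : Real.sqrt A ≤ Real.sqrt α := Real.sqrt_le_sqrt hα
      have := mul_le_mul_of_nonneg_left this Real.pi_pos.le
      exact le_trans this hπ
    rw [Set.indicator_of_mem hmem]
    have hsin1 : |Real.sin (s / Real.sqrt α)| ≤ 1 :=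
      abs_le.mpr ⟨Real.neg_one_le_sin _, Real.sin_le_one _⟩
    have hr1 : r ≤ Real.sqrt α / |s| := by
      rw [hr_def]
      gcongr
      exact mul_le_of_le_one_right hsq.le hsin1
    have hbpos : 0 < Real.sqrt α / |s| := div_pos hsq habs
    have hrle : r ^ α ≤ (Real.sqrt α / |s|) ^ α := Real.rpow_le_rpow hr0 hr1 hα0.le
    have step1 : (Real.sqrt α / |s|) ^ α
        = (Real.sqrt α / |s|) ^ A * (Real.sqrt α / |s|) ^ (α - A) := by
      rw [← Real.rpow_add hbpos]
      ring_nf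
    have hle1π : Real.sqrt α / |s| ≤ 1 / π := by
      rw [div_le_div_iff₀ habs Real.pi_pos]
      calc Real.sqrt α * π = π * Real.sqrt α := by ring
        _ ≤ |s| := hπ
        _ = 1 * |s| := by ring
    have step2 : (Real.sqrt α / |s|) ^ (α - A) ≤ (1 / π) ^ (α - A) :=
      Real.rpow_le_rpow hbpos.le hle1π (by linarith)
    have step3 : (Real.sqrt α / |s|) ^ A = α ^ (A/2) / |s| ^ A := by
      rw [Real.div_rpow hsq.le (abs_nonneg s), Real.sqrt_eq_rpow,
        ← Real.rpow_mul hα0.le]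
      ring_nf
    have step4 : α ^ (A/2) ≤ A ^ (A/2) * Real.exp ((α - A)/2) := by
      have hexp : α / A ≤ Real.exp (α / A - 1) := by
        have := Real.add_one_le_exp (α / A - 1)
        linarith
      have hin : α ≤ A * Real.exp (α / A - 1) := by
        have h6 := mul_le_mul_of_nonneg_left hexp hA0.le
        rw [mul_div_cancel₀ _ hA0.ne'] at h6
        exact h6
      calc α ^ (A/2) ≤ (A * Real.exp (α / A - 1)) ^ (A/2) :=
            Real.rpow_le_rpow hα0.le hin (by positivity)
        _ = A ^ (A/2) * (Real.exp (α / A - 1)) ^ (A/2) :=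
            Real.mul_rpow hA0.le (Real.exp_pos _).le
        _ = A ^ (A/2) * Real.exp ((α / A - 1) * (A/2)) := by
            rw [← Real.exp_mul]
        _ = A ^ (A/2) * Real.exp ((α - A)/2) := by
            congr 1
            field_simp
    have step5 : Real.exp ((α - A)/2) * (1/π) ^ (α - A) ≤ 1 := by
      have he : Real.exp ((α - A)/2) = (Real.exp (1/2)) ^ (α - A) := by
        rw [← Real.exp_mul]
        congr 1
        ring
      rw [he, ← Real.mul_rpow (Real.exp_pos _).le (by positivity)]
      apply Real.rpow_le_one (by positivity) ?_ (by linarith)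
      rw [mul_one_div, div_le_one Real.pi_pos]
      have hlt : Real.exp (1/2) < π := by
        calc Real.exp (1/2) ≤ Real.exp 1 := Real.exp_le_exp.2 (by norm_num)
          _ < 2.7182818286 := Real.exp_one_lt_d9
          _ < π := by linarith [Real.pi_gt_three]
      exact hlt.le
    have chain : r ^ α ≤ A ^ (A/2) / |s| ^ A := by
      calc r ^ α ≤ (Real.sqrt α / |s|) ^ α := hrle
        _ = (α ^ (A/2) / |s| ^ A) * (Real.sqrt α / |s|) ^ (α - A) := by
            rw [step1, step3]
        _ ≤ (α ^ (A/2) / |s| ^ A) * (1/π) ^ (α - A) := by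
            apply mul_le_mul_of_nonneg_left step2 (by positivity)
        _ ≤ ((A ^ (A/2) * Real.exp ((α - A)/2)) / |s| ^ A) * (1/π) ^ (α - A) := by
            refine mul_le_mul_of_nonneg_right ?_ (by positivity)
            gcongr
        _ = (A ^ (A/2) / |s| ^ A) * (Real.exp ((α - A)/2) * (1/π) ^ (α - A)) := by
            ring
        _ ≤ (A ^ (A/2) / |s| ^ A) * 1 :=
            mul_le_mul_of_nonneg_left step5 (by positivity)
        _ = A ^ (A/2) / |s| ^ A := by ring
    have final : |s| ^ c * r ^ α ≤ A ^ (A/2) * |s| ^ (c - A) := by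
      have h7 := mul_le_mul_of_nonneg_left chain (Real.rpow_nonneg (abs_nonneg s) c)
      calc |s| ^ c * r ^ α ≤ |s| ^ c * (A ^ (A/2) / |s| ^ A) := h7
        _ = A ^ (A/2) * (|s| ^ c / |s| ^ A) := by ring
        _ = A ^ (A/2) * |s| ^ (c - A) := by rw [← Real.rpow_sub habs]
    have hfirst : 0 ≤ |s| ^ c * Real.exp (-(1/12) * s^2) := by positivity
    linarith


lemma aux_integrable_comp_abs {f : ℝ → ℝ} (hf : IntegrableOn f (Ioi 0)) :
    Integrable (fun x => f |x|) := by
  have hIoi : IntegrableOn (fun x => f |x|) (Ioi 0) :=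
    hf.congr_fun (fun x hx => by rw [abs_of_pos hx]) measurableSet_Ioi
  have hIic : IntegrableOn (fun x ↦ f |x|) (Iic 0) := by
    rw [← Measure.map_neg_eq_self (volume : Measure ℝ)]
    have m : MeasurableEmbedding fun x : ℝ => -x :=
      (Homeomorph.neg ℝ).measurableEmbedding
    rw [m.integrableOn_map_iff]
    simp_rw [Function.comp_def, abs_neg, neg_preimage, neg_Iic, neg_zero]
    exact (integrableOn_Ici_iff_integrableOn_Ioi).mpr hIoi
  have h := hIic.union hIoi
  rwa [Iic_union_Ioi, integrableOn_univ] at h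

noncomputable def bfun (c A : ℝ) : ℝ → ℝ := fun s =>
  |s| ^ c * Real.exp (-(1/12) * s^2)
    + Set.indicator (Ici (π * Real.sqrt A)) (fun x => A ^ (A/2) * x ^ (c - A)) |s|

lemma bfun_integrable (c A : ℝ) (hc : -1 < c) (hA3 : 3 ≤ A) (hAc : c + 1 < A) :
    Integrable (bfun c A) := by
  have h1 : Integrable (fun s : ℝ => |s| ^ c * Real.exp (-(1/12) * s^2)) := by
    have hf : IntegrableOn (fun x : ℝ => x ^ c * Real.exp (-(1/12) * x^2)) (Ioi 0) :=
      integrableOn_rpow_mul_exp_neg_mul_sq (by norm_num) hc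
    have h := aux_integrable_comp_abs hf
    refine h.congr (Eventually.of_forall fun x => ?_)
    simp [sq_abs]
  have h2 : Integrable (fun s : ℝ =>
      Set.indicator (Ici (π * Real.sqrt A)) (fun x => A ^ (A/2) * x ^ (c - A)) |s|) := by
    have hr : 0 < π * Real.sqrt A := by
      have : (0:ℝ) < A := by linarith
      positivity
    have hint : IntegrableOn (fun x : ℝ => A ^ (A/2) * x ^ (c - A)) (Ici (π * Real.sqrt A)) := by
      rw [integrableOn_Ici_iff_integrableOn_Ioi]
      exact (integrableOn_Ioi_rpow_of_lt (by linarith) hr).const_mul _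
    have hIoi : IntegrableOn (fun x : ℝ =>
        Set.indicator (Ici (π * Real.sqrt A)) (fun x => A ^ (A/2) * x ^ (c - A)) x) (Ioi 0) :=
      ((integrable_indicator_iff measurableSet_Ici).2 hint).integrableOn
    exact aux_integrable_comp_abs hIoi
  exact h1.add h2

lemma G_meas (c : ℝ) {α : ℝ} (hα : 0 ≤ α) (hαc : 0 ≤ α - c) :
    AEStronglyMeasurable (Gfun c α) volume := by
  apply Measurable.aestronglyMeasurable
  apply Measurable.div
  · exact ((Real.continuous_rpow_const hα).comp
      (continuous_const.mul ((Real.continuous_sin.comp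
        (continuous_id.div_const _)).abs))).measurable
  · exact ((Real.continuous_rpow_const hαc).comp continuous_abs).measurable

lemma gamma_eq (c : ℝ) (hc : -1 < c) :
    ∫ s : ℝ, |s| ^ c * Real.exp (-(1/6) * s^2)
      = 6 ^ ((c+1)/2) * Real.Gamma ((c+1)/2) := by
  have h0 : (∫ s : ℝ, |s| ^ c * Real.exp (-(1/6) * s^2))
      = ∫ s : ℝ, (fun x : ℝ => x ^ c * Real.exp (-(1/6) * x^2)) |s| := by
    congr 1
    funext s
    simp [sq_abs]
  rw [h0, integral_comp_abs (f := fun x : ℝ => x ^ c * Real.exp (-(1/6) * x^2))]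
  have h1 : ∫ x in Ioi (0:ℝ), x ^ c * Real.exp (-(1/6) * x^2)
      = ((1:ℝ)/6) ^ (-(c+1)/2) * (1/2) * Real.Gamma ((c+1)/2) := by
    have h := integral_rpow_mul_exp_neg_mul_rpow (p := 2) (q := c) (b := 1/6)
      (by norm_num) hc (by norm_num)
    rw [← h]
    refine setIntegral_congr_fun measurableSet_Ioi (fun x hx => ?_)
    rw [Real.rpow_two]
  rw [h1]
  have h2 : ((1:ℝ)/6) ^ (-(c+1)/2) = (6:ℝ) ^ ((c+1)/2) := by
    rw [one_div, ← Real.rpow_neg_one (6:ℝ), ← Real.rpow_mul (by norm_num)]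
    congr 1
    ring
  rw [h2]
  ring


theorem moment_integral_asymptotic_const_diff (c : ℝ) (hc : -1 < c) :
    Tendsto (fun α : ℝ => α ^ ((c + 1) / 2) * ∫ t : ℝ, |Real.sin t| ^ α / |t| ^ (α - c))
      atTop (nhds (6 ^ ((c + 1) / 2) * Real.Gamma ((c + 1) / 2))) := by
  set A : ℝ := max 3 (c + 2) with hA_def
  have hA3 : (3:ℝ) ≤ A := le_max_left _ _
  have hAc : c + 2 ≤ A := le_max_right _ _
  have hDCT : Tendsto (fun α : ℝ => ∫ s : ℝ, Gfun c α s) atTop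
      (𝓝 (∫ s : ℝ, |s| ^ c * Real.exp (-(1/6) * s^2))) := by
    apply MeasureTheory.tendsto_integral_filter_of_dominated_convergence (bfun c A)
    · filter_upwards [eventually_ge_atTop A] with α hα
      exact G_meas c (by linarith) (by linarith)
    · filter_upwards [eventually_ge_atTop A] with α hα
      refine Eventually.of_forall (fun s => ?_)
      have hnn : 0 ≤ Gfun c α s := by
        rw [Gfun]
        positivity
      rw [Real.norm_eq_abs, abs_of_nonneg hnn]
      exact G_bound c A hA3 hα s
    · exact bfun_integrable c A hc hA3 (by linarith)
    · have hae : ∀ᵐ s : ℝ, s ≠ (0:ℝ) := by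
        refine ae_iff.mpr ?_
        simp only [ne_eq, not_not, setOf_eq_eq_singleton]
        exact Real.volume_singleton
      filter_upwards [hae] with s hs
      exact G_tendsto c hs
  rw [show (6:ℝ) ^ ((c + 1) / 2) * Real.Gamma ((c + 1) / 2)
      = ∫ s : ℝ, |s| ^ c * Real.exp (-(1/6) * s^2) from (gamma_eq c hc).symm]
  refine hDCT.congr' ?_
  filter_upwards [eventually_gt_atTop (0:ℝ)] with α hα
  exact (sub_eq c hα).symm
end

section
/- lim_{α→∞} √α · ∫_{ℝ} |sin t / t|^α dt = √(6π). -/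
open Real MeasureTheory Filter Topology

noncomputable def f0 (t : ℝ) : ℝ := if t = 0 then (1:ℝ) else |Real.sin t / t|

lemma f0_nonneg (t : ℝ) : 0 ≤ f0 t := by
  unfold f0; split <;> positivity

lemma f0_eq_div {t : ℝ} (h0 : t ≠ 0) (h : |t| ≤ π) : f0 t = Real.sin t / t := by
  have hnn : 0 ≤ Real.sin t / t := by
    rcases h0.lt_or_gt with hneg | hpos
    · have hs : Real.sin t ≤ 0 := by
        rw [← neg_nonneg, ← Real.sin_neg]
        exact Real.sin_nonneg_of_nonneg_of_le_pi (by linarith)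
          (by rw [abs_of_neg hneg] at h; linarith)
      rw [← neg_div_neg_eq]
      exact div_nonneg (by linarith) (by linarith)
    · exact div_nonneg (Real.sin_nonneg_of_nonneg_of_le_pi hpos.le
        (by rwa [abs_of_pos hpos] at h)) hpos.le
  rw [f0, if_neg h0, abs_of_nonneg hnn]

lemma f0_lt_one {t : ℝ} (h : t ≠ 0) : f0 t < 1 := by
  have hπ := Real.pi_gt_three
  rw [f0, if_neg h, abs_div, div_lt_one (abs_pos.2 h)]
  rcases le_or_gt |t| 1 with h1 | h1
  · have h0 : 0 < |t| := abs_pos.2 h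
    have hlt : Real.sin |t| < |t| := Real.sin_lt h0
    have habs : |Real.sin t| = Real.sin |t| := by
      rcases h.lt_or_gt with hn | hp
      · have hs : Real.sin t < 0 := by
          rw [← neg_pos, ← Real.sin_neg]
          apply Real.sin_pos_of_pos_of_lt_pi (by linarith)
          rw [abs_of_neg hn] at h1; linarith
        rw [abs_of_neg hs, ← Real.sin_neg, abs_of_neg hn]
      · have hs : 0 ≤ Real.sin t := by
          apply Real.sin_nonneg_of_nonneg_of_le_pi hp.le
          rw [abs_of_pos hp] at h1; linarith
        rw [abs_of_nonneg hs, abs_of_pos hp]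
    rw [habs]; exact hlt
  · calc |Real.sin t| ≤ 1 := abs_le.2 ⟨Real.neg_one_le_sin t, Real.sin_le_one t⟩
      _ < |t| := h1

lemma f0_pos {t : ℝ} (h0 : t ≠ 0) (h : |t| < π) : 0 < f0 t := by
  rw [f0, if_neg h0]
  apply abs_pos.2
  apply div_ne_zero _ h0
  rcases h0.lt_or_gt with hn | hp
  · have : 0 < Real.sin (-t) := Real.sin_pos_of_pos_of_lt_pi (by linarith)
      (by rwa [abs_of_neg hn] at h)
    rw [Real.sin_neg] at this
    exact ne_of_lt (by linarith)
  · exact (Real.sin_pos_of_pos_of_lt_pi hp (by rwa [abs_of_pos hp] at h)).ne'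

lemma f0_le_inv {t : ℝ} (h : t ≠ 0) : f0 t ≤ |t|⁻¹ := by
  rw [f0, if_neg h, abs_div]
  rw [div_le_iff₀ (abs_pos.2 h), inv_mul_cancel₀ (abs_pos.2 h).ne']
  exact abs_le.2 ⟨Real.neg_one_le_sin t, Real.sin_le_one t⟩

lemma f0_meas : Measurable f0 := by
  unfold f0
  exact Measurable.ite (by simpa using measurableSet_singleton (0:ℝ)) measurable_const
    ((Real.measurable_sin.div measurable_id).abs)

lemma f0_le_gauss {t : ℝ} (h : |t| ≤ π) : f0 t ≤ Real.exp (-(2*π^2)⁻¹ * t^2) := by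
  have hπ := Real.pi_pos
  have main : ∀ u : ℝ, 0 < u → u ≤ π → Real.sin u / u ≤ Real.exp (-(2*π^2)⁻¹ * u^2) := by
    intro u h0 huπ
    have hc : Real.cos (u/2) ≤ 1 - 2/π^2 * (u/2)^2 :=
      Real.cos_le_one_sub_mul_cos_sq (by rw [abs_of_nonneg (by linarith)]; linarith)
    have hcnn : 0 ≤ Real.cos (u/2) := Real.cos_nonneg_of_mem_Icc ⟨by linarith, by linarith⟩
    have hs : Real.sin (u/2) ≤ u/2 := Real.sin_le (by linarith)
    have h2 : Real.sin u ≤ u * Real.cos (u/2) := by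
      have hdouble : Real.sin u = 2 * Real.sin (u/2) * Real.cos (u/2) := by
        calc Real.sin u = Real.sin (2*(u/2)) := by ring_nf
          _ = 2*Real.sin (u/2)*Real.cos (u/2) := Real.sin_two_mul _
      rw [hdouble]
      nlinarith [mul_le_mul_of_nonneg_right hs hcnn]
    have heq : 2/π^2 * (u/2)^2 = (2*π^2)⁻¹ * u^2 := by
      field_simp
    have h3 : Real.sin u / u ≤ 1 - (2*π^2)⁻¹ * u^2 := by
      rw [div_le_iff₀ h0]
      calc Real.sin u ≤ u * Real.cos (u/2) := h2
        _ ≤ u * (1 - 2/π^2*(u/2)^2) := mul_le_mul_of_nonneg_left hc h0.le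
        _ = (1 - (2*π^2)⁻¹*u^2) * u := by rw [heq]; ring
    calc Real.sin u / u ≤ 1 - (2*π^2)⁻¹*u^2 := h3
      _ ≤ Real.exp (-((2*π^2)⁻¹*u^2)) := Real.one_sub_le_exp_neg _
      _ = Real.exp (-(2*π^2)⁻¹*u^2) := by ring_nf
  rcases eq_or_ne t 0 with rfl | ht
  · simp [f0]
  · have h0 : 0 < |t| := abs_pos.2 ht
    have hmain := main |t| h0 h
    rw [f0_eq_div ht h]
    have hev : Real.sin t / t = Real.sin |t| / |t| := by
      rcases ht.lt_or_gt with hn | hp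
      · rw [abs_of_neg hn, Real.sin_neg, neg_div_neg_eq]
      · rw [abs_of_pos hp]
    rw [hev]
    calc Real.sin |t| / |t| ≤ Real.exp (-(2*π^2)⁻¹ * |t|^2) := hmain
      _ = Real.exp (-(2*π^2)⁻¹ * t^2) := by rw [sq_abs]

lemma f0_slope : Tendsto (fun t : ℝ => (f0 t - 1) / t^2) (𝓝[≠] (0:ℝ)) (𝓝 (-(1/6))) := by
  have hπ := Real.pi_gt_three
  rw [← tendsto_sub_nhds_zero_iff]
  apply squeeze_zero_norm' (a := fun t : ℝ => 5/96 * |t|)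
  · have habs1 : ∀ᶠ t : ℝ in 𝓝 0, |t| < 1 := by
      have h := (continuous_abs.tendsto (0:ℝ))
      simp only [abs_zero] at h
      exact h.eventually_lt_const one_pos
    filter_upwards [self_mem_nhdsWithin, eventually_nhdsWithin_of_eventually_nhds habs1]
      with t ht h1
    have ht0 : t ≠ 0 := ht
    have hf : f0 t = Real.sin t / t := f0_eq_div ht0 (by linarith [h1.le])
    have hkey : (f0 t - 1)/t^2 - -(1/6) = (Real.sin t - (t - t^3/6))/t^3 := by
      rw [hf]; field_simp; ring
    rw [Real.norm_eq_abs, hkey, abs_div]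
    have h3 : |t^3| = |t|^3 := abs_pow t 3
    rw [h3]
    have hpos3 : (0:ℝ) < |t|^3 := by positivity
    calc |Real.sin t - (t - t^3/6)| / |t|^3 ≤ (|t|^4 * (5/96)) / |t|^3 := by
          exact div_le_div_of_nonneg_right ((Real.sin_bound h1.le).trans (show |t|^5/100 ≤ |t|^4 * (5/96) by nlinarith [mul_le_mul_of_nonneg_left h1.le (pow_nonneg (abs_nonneg t) 4), abs_nonneg t])) hpos3.le
      _ = 5/96 * |t| := by
          field_simp
  · have : Tendsto (fun t : ℝ => 5/96 * |t|) (𝓝 0) (𝓝 (5/96 * |(0:ℝ)|)) := by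
      exact ((continuous_const.mul continuous_abs).tendsto 0)
    simp only [abs_zero, mul_zero] at this
    exact this.mono_left nhdsWithin_le_nhds

lemma f0_tendsto_one : Tendsto f0 (𝓝[≠] (0:ℝ)) (𝓝 1) := by
  have hsq : Tendsto (fun t : ℝ => t^2) (𝓝[≠] (0:ℝ)) (𝓝 0) := by
    have h : Tendsto (fun t : ℝ => t^2) (𝓝 0) (𝓝 ((0:ℝ)^2)) := (continuous_pow 2).tendsto 0
    simpa using h.mono_left nhdsWithin_le_nhds
  have hprod := f0_slope.mul hsq
  rw [mul_zero] at hprod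
  have h1 : Tendsto (fun t : ℝ => f0 t - 1) (𝓝[≠] (0:ℝ)) (𝓝 0) := by
    refine Tendsto.congr' ?_ hprod
    filter_upwards [self_mem_nhdsWithin] with t ht
    exact div_mul_cancel₀ _ (pow_ne_zero 2 ht)
  exact tendsto_sub_nhds_zero_iff.1 h1

lemma f0_log : Tendsto (fun t : ℝ => Real.log (f0 t) / t^2) (𝓝[≠] (0:ℝ)) (𝓝 (-(1/6))) := by
  have hne : ∀ᶠ t : ℝ in 𝓝[≠] (0:ℝ), f0 t ≠ 1 := by
    filter_upwards [self_mem_nhdsWithin] with t ht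
    exact (f0_lt_one ht).ne
  have hf1 : Tendsto f0 (𝓝[≠] (0:ℝ)) (𝓝[≠] (1:ℝ)) := by
    rw [tendsto_nhdsWithin_iff]
    exact ⟨f0_tendsto_one, hne.mono fun t h => Set.mem_compl_singleton_iff.2 h⟩
  have hlog : Tendsto (fun x : ℝ => Real.log x / (x - 1)) (𝓝[≠] (1:ℝ)) (𝓝 1) := by
    have h := Real.hasDerivAt_log one_ne_zero
    rw [hasDerivAt_iff_tendsto_slope] at h
    have heq : (fun x : ℝ => Real.log x / (x - 1)) = slope Real.log 1 := by
      funext x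
      rw [slope_def_field, Real.log_one, sub_zero]
    rw [heq]
    simpa using h
  have hcomp := (hlog.comp hf1).mul f0_slope
  rw [one_mul] at hcomp
  refine Tendsto.congr' ?_ hcomp
  filter_upwards [hne, self_mem_nhdsWithin] with t h1 h0
  have hb : f0 t - 1 ≠ 0 := sub_ne_zero.2 h1
  have ht2 : (t:ℝ)^2 ≠ 0 := pow_ne_zero 2 h0
  simp only [Function.comp_apply]
  field_simp

lemma tendsto_sqrt_atTop : Tendsto Real.sqrt atTop atTop := by
  refine tendsto_atTop_atTop.2 fun b => ⟨max b 0 ^ 2, fun a ha => ?_⟩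
  calc b ≤ max b 0 := le_max_left _ _
    _ ≤ √a := (Real.le_sqrt (le_max_right _ _) (le_trans (sq_nonneg _) ha)).2 ha

lemma ptwise (s : ℝ) :
    Tendsto (fun α : ℝ => f0 ((Real.sqrt α)⁻¹ * s) ^ α) atTop
      (𝓝 (Real.exp (-(1/6) * s^2))) := by
  rcases eq_or_ne s 0 with rfl | hs
  · simpa [f0, Real.one_rpow] using tendsto_const_nhds
  · have h0 : Tendsto (fun α : ℝ => (√α)⁻¹ * s) atTop (𝓝 0) := by
      have := (_root_.tendsto_sqrt_atTop.inv_tendsto_atTop).mul_const s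
      simpa using this
    have hne : ∀ᶠ α : ℝ in atTop, (√α)⁻¹ * s ≠ 0 := by
      filter_upwards [eventually_gt_atTop (0:ℝ)] with α hα
      exact mul_ne_zero (inv_ne_zero (Real.sqrt_ne_zero'.2 hα)) hs
    have ht : Tendsto (fun α : ℝ => (√α)⁻¹ * s) atTop (𝓝[≠] (0:ℝ)) :=
      tendsto_nhdsWithin_iff.2 ⟨h0, hne.mono fun α h => Set.mem_compl_singleton_iff.2 h⟩
    have hcomp : Tendsto (fun α : ℝ => Real.log (f0 ((√α)⁻¹*s)) / ((√α)⁻¹*s)^2)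
        atTop (𝓝 (-(1/6))) := f0_log.comp ht
    have hmul := hcomp.const_mul (s^2)
    have hAL : Tendsto (fun α : ℝ => α * Real.log (f0 ((√α)⁻¹*s))) atTop
        (𝓝 (-(1/6) * s^2)) := by
      rw [show -(1/6) * s^2 = s^2 * -(1/6) by ring]
      refine Tendsto.congr' ?_ hmul
      filter_upwards [eventually_gt_atTop (0:ℝ)] with α hα
      have h1 : ((√α)⁻¹*s)^2 = s^2/α := by
        rw [mul_pow, inv_pow, Real.sq_sqrt hα.le]; ring
      rw [h1]
      field_simp
    have hexp := (Real.continuous_exp.tendsto _).comp hAL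
    refine Tendsto.congr' ?_ hexp
    have hlt : ∀ᶠ α : ℝ in atTop, |(√α)⁻¹*s| < π := by
      have habs : Tendsto (fun α : ℝ => |(√α)⁻¹*s|) atTop (𝓝 0) := by
        have := h0.abs; simpa using this
      exact habs.eventually_lt_const Real.pi_pos
    filter_upwards [hne, hlt] with α h1 h2
    have hpos : 0 < f0 ((√α)⁻¹*s) := f0_pos h1 h2
    simp only [Function.comp_apply]
    rw [Real.rpow_def_of_pos hpos, mul_comm]

lemma intlim : Tendsto (fun α : ℝ => ∫ s : ℝ, f0 ((Real.sqrt α)⁻¹ * s) ^ α) atTop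
    (𝓝 (∫ s : ℝ, Real.exp (-(1/6) * s^2))) := by
  have hπ := Real.pi_pos
  apply tendsto_integral_filter_of_dominated_convergence
    (bound := fun s : ℝ => Real.exp (-(2*π^2)⁻¹ * s^2) + 2 * (1 + s^2)⁻¹)
  · filter_upwards with α
    have hg : Measurable fun s : ℝ => f0 ((√α)⁻¹ * s) :=
      f0_meas.comp (measurable_const_mul _)
    have hr : Measurable fun x : ℝ => x ^ α := by measurability
    exact (hr.comp hg).aestronglyMeasurable
  · filter_upwards [eventually_ge_atTop (4:ℝ)] with α hα4
    refine Eventually.of_forall fun s => ?_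
    have hα0 : (0:ℝ) < α := by linarith
    set t := (√α)⁻¹ * s with htdef
    have hnn : 0 ≤ f0 t ^ α := Real.rpow_nonneg (f0_nonneg t) α
    rw [Real.norm_eq_abs, abs_of_nonneg hnn]
    have hsq2 : Real.sqrt α ^ 2 = α := Real.sq_sqrt hα0.le
    have hsqpos : 0 < √α := Real.sqrt_pos.2 hα0
    by_cases hcase : |t| ≤ π
    · have h1 : f0 t ^ α ≤ Real.exp (-(2*π^2)⁻¹ * t^2) ^ α :=
        Real.rpow_le_rpow (f0_nonneg t) (f0_le_gauss hcase) hα0.le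
      have ht2 : t^2 * α = s^2 := by
        rw [htdef, mul_pow, inv_pow, hsq2]
        field_simp
      have h2 : Real.exp (-(2*π^2)⁻¹ * t^2) ^ α = Real.exp (-(2*π^2)⁻¹ * s^2) := by
        rw [← Real.exp_mul]
        congr 1
        rw [show -(2*π^2)⁻¹ * t^2 * α = -(2*π^2)⁻¹ * (t^2 * α) by ring, ht2]
      calc f0 t ^ α ≤ Real.exp (-(2*π^2)⁻¹ * s^2) := by rw [← h2]; exact h1
        _ ≤ _ := le_add_of_nonneg_right (by positivity)
    · push_neg at hcase
      have ht0 : t ≠ 0 := by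
        intro h; rw [h, abs_zero] at hcase; linarith
      have hs0 : s ≠ 0 := by
        intro h; rw [h, mul_zero] at htdef; exact ht0 htdef
      have habs : |t| = (√α)⁻¹ * |s| := by
        rw [htdef, abs_mul, abs_inv, abs_of_pos hsqpos]
      have hspos : 0 < |s| := abs_pos.2 hs0
      have hsqα : 2 ≤ √α := by
        rw [show (2:ℝ) = Real.sqrt 4 by
          rw [show (4:ℝ) = 2^2 by norm_num, Real.sqrt_sq (by norm_num)]]
        exact Real.sqrt_le_sqrt hα4
      have h5 : π * √α < |s| := by
        rw [habs] at hcase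
        have h6 : ((√α)⁻¹*|s|)*√α = |s| := by field_simp
        nlinarith [mul_lt_mul_of_pos_right hcase hsqpos]
      set x := √α / |s| with hxdef
      have hxpos : 0 < x := div_pos hsqpos hspos
      have hxlt : x < π⁻¹ := by
        rw [hxdef, div_lt_iff₀ hspos]
        have h7 : √α < π⁻¹ * |s| := by
          have h8 := mul_lt_mul_of_pos_left h5 (inv_pos.2 hπ)
          rwa [← mul_assoc, inv_mul_cancel₀ hπ.ne', one_mul] at h8
        linarith [h7]
      have hf : f0 t ≤ x := by
        calc f0 t ≤ |t|⁻¹ := f0_le_inv ht0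
          _ = x := by rw [habs, mul_inv, inv_inv, hxdef, div_eq_mul_inv]
      have hstep : f0 t ^ α ≤ x ^ α := Real.rpow_le_rpow (f0_nonneg t) hf hα0.le
      have hxα : x ^ α = x^(2:ℝ) * x^(α - 2) := by
        rw [← Real.rpow_add hxpos]; ring_nf
      have hb1 : x ^ (α - 2) ≤ π⁻¹ ^ (α-2) :=
        Real.rpow_le_rpow hxpos.le hxlt.le (by linarith)
      have hb2 : (π⁻¹:ℝ) ^ (α-2) ≤ Real.exp (-(α-2)) := by
        have he : Real.exp 1 ≤ π := by
          have := Real.exp_one_lt_d9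
          have := Real.pi_gt_d6
          linarith
        have h8 : π⁻¹ ≤ Real.exp (-1) := by
          rw [Real.exp_neg]
          exact inv_anti₀ (Real.exp_pos 1) he
        calc (π⁻¹:ℝ)^(α-2) ≤ (Real.exp (-1))^(α-2) :=
              Real.rpow_le_rpow (by positivity) h8 (by linarith)
          _ = Real.exp (-(α-2)) := by rw [← Real.exp_mul]; ring_nf
      have hx2 : x^(2:ℝ) = α / s^2 := by
        rw [show (2:ℝ) = ((2:ℕ):ℝ) by norm_num, Real.rpow_natCast, hxdef, div_pow, hsq2,
          sq_abs]
      have hexpb : Real.exp (-(α-2)) * α ≤ 1 := by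
        have h9 : (α-2)/2 + 1 ≤ Real.exp ((α-2)/2) := Real.add_one_le_exp _
        have h10 : Real.exp ((α-2)/2) * Real.exp ((α-2)/2) = Real.exp (α-2) := by
          rw [← Real.exp_add]; ring_nf
        have h11 : α ≤ Real.exp (α - 2) := by nlinarith [Real.exp_pos ((α-2)/2)]
        rw [Real.exp_neg, inv_mul_le_iff₀ (Real.exp_pos _)]
        linarith
      have hs2 : (1:ℝ) ≤ s^2 := by
        have h12 : 1 ≤ |s| := by nlinarith [mul_le_mul_of_nonneg_left hsqα hπ.le, Real.pi_gt_three]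
        nlinarith [sq_abs s]
      have hs2pos : (0:ℝ) < s^2 := by positivity
      have hA : x^α ≤ (α/s^2) * Real.exp (-(α-2)) := by
        rw [hxα, hx2]
        exact mul_le_mul_of_nonneg_left (le_trans hb1 hb2) (by positivity)
      have hB : (α/s^2) * Real.exp (-(α-2)) ≤ 1/s^2 := by
        rw [show (α/s^2) * Real.exp (-(α-2)) = (Real.exp (-(α-2)) * α)/s^2 by ring]
        apply div_le_div_of_nonneg_right hexpb hs2pos.le
      have hC : 1/s^2 ≤ 2*(1+s^2)⁻¹ := by
        rw [show (2:ℝ)*(1+s^2)⁻¹ = 2/(1+s^2) by ring, div_le_div_iff₀ hs2pos (by positivity)]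
        nlinarith
      calc f0 t ^ α ≤ x ^ α := hstep
        _ ≤ 2*(1+s^2)⁻¹ := hA.trans (hB.trans hC)
        _ ≤ _ := le_add_of_nonneg_left (by positivity)
  · exact (integrable_exp_neg_mul_sq (by positivity)).add
      (integrable_inv_one_add_sq.const_mul 2)
  · exact Eventually.of_forall fun s => ptwise s

lemma cov {α : ℝ} (hα : 0 < α) :
    Real.sqrt α * ∫ t : ℝ, f0 t ^ α = ∫ s : ℝ, f0 ((Real.sqrt α)⁻¹ * s) ^ α := by
  rw [MeasureTheory.Measure.integral_comp_inv_mul_left (fun t => f0 t ^ α) (√α),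
    smul_eq_mul, abs_of_pos (Real.sqrt_pos.2 hα)]

theorem ball_asymptotic :
    Tendsto (fun α : ℝ =>
        Real.sqrt α * ∫ t : ℝ, (if t = 0 then (1:ℝ) else |Real.sin t / t|) ^ α)
      atTop (nhds (Real.sqrt (6 * Real.pi))) := by
  have hval : (∫ s : ℝ, Real.exp (-(1/6) * s^2)) = Real.sqrt (6 * π) := by
    have := integral_gaussian (1/6 : ℝ)
    rw [show π / (1/6 : ℝ) = 6 * π by ring] at this
    exact this
  have h := intlim
  rw [hval] at h
  refine Tendsto.congr' ?_ h
  filter_upwards [eventually_gt_atTop (0:ℝ)] with α hα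
  exact (cov hα).symm
end

section
/- As α → ∞, I(α, ⌊α⌋) ~ (6/α)^{(α-⌊α⌋+1)/2} Γ((α-⌊α⌋+1)/2), i.e. the ratio of the two sides tends to 1. -/
open Real MeasureTheory Filter Set

private lemma exp_neg_le_cubic {x : ℝ} (h0 : 0 ≤ x) (h1 : x ≤ 1) :
    Real.exp (-x) ≤ 1 - x + x^2/2 + (2/9)*x^3 := by
  have h := Real.exp_bound (x := -x) (by rwa [abs_neg, abs_of_nonneg h0]) (n := 3) (by norm_num)
  rw [abs_neg, abs_of_nonneg h0] at h
  have hs : ∑ m ∈ Finset.range 3, (-x) ^ m / (Nat.factorial m) = 1 - x + x^2/2 := by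
    simp [Finset.sum_range_succ, Nat.factorial]
    ring
  rw [hs] at h
  norm_num [Nat.factorial] at h
  have := (abs_le.mp h).2
  nlinarith [this]

private lemma sin_upper {t : ℝ} (h0 : 0 < t) (h1 : t ≤ 1) :
    Real.sin t ≤ t * Real.exp (-(t^2/6) + t^3/16) := by
  have hb := Real.sin_bound (x := t) (by rwa [abs_of_pos h0])
  rw [abs_of_pos h0] at hb
  have hsin : Real.sin t ≤ t - t^3/6 + t^4 * (5/96) := by
    have := (abs_le.mp hb).2; nlinarith [mul_le_mul_of_nonneg_right h1 (pow_nonneg h0.le 4), pow_nonneg h0.le 4]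
  have e1 : 1 + (-(t^2/6)) ≤ Real.exp (-(t^2/6)) := by
    linarith [Real.add_one_le_exp (-(t^2/6))]
  have e2 : 1 + t^3/16 ≤ Real.exp (t^3/16) := by
    linarith [Real.add_one_le_exp (t^3/16)]
  have hexp : Real.exp (-(t^2/6) + t^3/16) = Real.exp (-(t^2/6)) * Real.exp (t^3/16) :=
    (Real.exp_add _ _)
  have hy : (0:ℝ) ≤ 1 - t^2/6 := by nlinarith
  have hz : (0:ℝ) ≤ 1 + t^3/16 := by positivity
  have key : (1 - t^2/6) * (1 + t^3/16) ≤ Real.exp (-(t^2/6) + t^3/16) := by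
    rw [hexp]
    have := mul_le_mul e1 e2 (by linarith) (Real.exp_nonneg _)
    calc (1 - t^2/6) * (1 + t^3/16) = (1 + (-(t^2/6))) * (1 + t^3/16) := by ring
    _ ≤ Real.exp (-(t^2/6)) * Real.exp (t^3/16) := this
  have poly : t - t^3/6 + t^4 * (5/96) ≤ t * ((1 - t^2/6) * (1 + t^3/16)) := by
    nlinarith [pow_nonneg h0.le 3, pow_nonneg h0.le 4, pow_nonneg h0.le 5]
  calc Real.sin t ≤ t - t^3/6 + t^4 * (5/96) := hsin
    _ ≤ t * ((1 - t^2/6) * (1 + t^3/16)) := poly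
    _ ≤ t * Real.exp (-(t^2/6) + t^3/16) := by
        exact mul_le_mul_of_nonneg_left key h0.le

private lemma sin_lower {t : ℝ} (h0 : 0 < t) (h1 : t ≤ 1) :
    t * Real.exp (-(t^2/6) - t^3/4) ≤ Real.sin t := by
  have hb := Real.sin_bound (x := t) (by rwa [abs_of_pos h0])
  rw [abs_of_pos h0] at hb
  have hsin : t - t^3/6 - t^4 * (5/96) ≤ Real.sin t := by
    have := (abs_le.mp hb).1; nlinarith [mul_le_mul_of_nonneg_right h1 (pow_nonneg h0.le 4), pow_nonneg h0.le 4]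
  set x : ℝ := t^2/6 + t^3/4 with hx
  have hx0 : 0 ≤ x := by positivity
  have hx1 : x ≤ 1 := by
    have h2 : t^2 ≤ 1 := by nlinarith
    have h3 : t^3 ≤ 1 := by nlinarith
    rw [hx]; linarith
  have he : Real.exp (-x) ≤ 1 - x + x^2/2 + (2/9)*x^3 := exp_neg_le_cubic hx0 hx1
  have poly : t * (1 - x + x^2/2 + (2/9)*x^3) ≤ t - t^3/6 - t^4 * (5/96) := by
    rw [hx]
    nlinarith [pow_nonneg h0.le 2, pow_nonneg h0.le 3, pow_nonneg h0.le 4,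
        pow_nonneg h0.le 5, pow_nonneg h0.le 6, pow_nonneg h0.le 7,
        pow_nonneg h0.le 8, pow_nonneg h0.le 9, pow_nonneg h0.le 10, sq_nonneg (1-t)]
  have : t * Real.exp (-(t^2/6) - t^3/4) = t * Real.exp (-x) := by
    rw [hx]; ring_nf
  rw [this]
  have h2 : t * Real.exp (-x) ≤ t * (1 - x + x^2/2 + (2/9)*x^3) :=
    mul_le_mul_of_nonneg_left he h0.le
  linarith

private lemma abs_sin_le_global {t : ℝ} (ht : 1 ≤ t) : |Real.sin t| ≤ Real.sin 1 * t := by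
  have hs1 : (25:ℝ)/32 ≤ Real.sin 1 := by
    have hb := Real.sin_bound (x := 1) (by norm_num)
    have := (abs_le.mp hb).1; norm_num at this ⊢; linarith
  rcases le_or_gt t (13/10) with hcase | hcase
  · -- 1 ≤ t ≤ 1.3 : sin t ≤ t * sin 1 via concavity-type argument
    have hpi : t ≤ Real.pi := by
      have := Real.pi_gt_three; linarith
    have hsnn : 0 ≤ Real.sin t := Real.sin_nonneg_of_nonneg_of_le_pi (by linarith) hpi
    rw [abs_of_nonneg hsnn]
    have hdiff : Real.sin t - Real.sin 1
        = 2 * Real.sin ((t - 1)/2) * Real.cos ((t + 1)/2) := Real.sin_sub_sin t 1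
    have h1 : Real.sin ((t-1)/2) ≤ (t-1)/2 := Real.sin_le (by linarith)
    have h1' : 0 ≤ Real.sin ((t-1)/2) :=
      Real.sin_nonneg_of_nonneg_of_le_pi (by linarith)
        (by have := Real.pi_gt_three; linarith)
    have h2 : Real.cos ((t+1)/2) ≤ Real.cos 1 := by
      apply Real.cos_le_cos_of_nonneg_of_le_pi (by norm_num) (by have := Real.pi_gt_three; linarith)
      linarith
    have hc1 : 0 < Real.cos 1 := Real.cos_pos_of_mem_Ioo
      ⟨by have := Real.pi_gt_three; linarith, by have := Real.pi_gt_three; linarith⟩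
    have hc2 : Real.cos 1 ≤ 2/3 := le_trans Real.cos_one_le (by norm_num)
    have : Real.sin t - Real.sin 1 ≤ 2 * ((t-1)/2) * Real.cos 1 := by
      rw [hdiff]
      have s1 : 2 * Real.sin ((t - 1)/2) * Real.cos ((t + 1)/2)
          ≤ 2 * Real.sin ((t - 1)/2) * Real.cos 1 := by
        apply mul_le_mul_of_nonneg_left h2 (by linarith)
      have s2 : 2 * Real.sin ((t - 1)/2) * Real.cos 1 ≤ 2 * ((t-1)/2) * Real.cos 1 := by
        apply mul_le_mul_of_nonneg_right (by linarith) hc1.le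
      linarith
    have hmain : Real.sin t ≤ Real.sin 1 + (t - 1) * Real.cos 1 := by linarith
    have : Real.sin 1 + (t-1) * Real.cos 1 ≤ Real.sin 1 * t := by
      have : (t-1) * Real.cos 1 ≤ (t-1) * Real.sin 1 := by
        apply mul_le_mul_of_nonneg_left _ (by linarith)
        linarith
      nlinarith
    linarith
  · -- t > 1.3 : |sin t| ≤ 1 ≤ sin 1 * t
    have h1 : |Real.sin t| ≤ 1 := Real.abs_sin_le_one _
    have : (1:ℝ) ≤ Real.sin 1 * t := by nlinarith
    linarith

private lemma gauss_moment {b g : ℝ} (hb : 0 < b) (hg : -1 < g) :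
    ∫ t in Ioi (0:ℝ), t ^ g * Real.exp (-b * t^2)
      = (1/b) ^ ((g+1)/2) * Real.Gamma ((g+1)/2) / 2 := by
  have key := integral_comp_rpow_Ioi_of_pos
    (g := fun u : ℝ => u ^ ((g-1)/2) * Real.exp (-(b * u))) (p := 2) (by norm_num)
  have lhs_eq : (∫ x in Ioi (0:ℝ), ((2:ℝ) * x ^ ((2:ℝ) - 1)) •
      ((x ^ (2:ℝ)) ^ ((g-1)/2) * Real.exp (-(b * x ^ (2:ℝ)))))
      = 2 * ∫ t in Ioi (0:ℝ), t ^ g * Real.exp (-b * t^2) := by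
    rw [← integral_const_mul]
    refine setIntegral_congr_fun measurableSet_Ioi (fun x hx => ?_)
    have hx0 : (0:ℝ) < x := hx
    have h1 : (x ^ (2:ℝ)) ^ ((g-1)/2) = x ^ (g-1) := by
      rw [← Real.rpow_mul hx0.le]
      congr 1; ring
    have h2 : x ^ (2:ℝ) = x ^ 2 := by
      rw [show ((2:ℝ)) = ((2:ℕ):ℝ) by norm_num, Real.rpow_natCast]
    rw [h1, h2]
    have h3 : x ^ ((2:ℝ) - 1) = x := by
      norm_num
    rw [h3]
    rw [smul_eq_mul]
    have h4 : x * x ^ (g-1) = x ^ g := by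
      nth_rewrite 1 [← Real.rpow_one x]
      rw [← Real.rpow_add hx0]; ring_nf
    have : -(b * x^2) = -b * x^2 := by ring
    rw [this]
    ring_nf
    rw [mul_comm]
    rw [← h4]
    ring
  have rhs_eq : (∫ u in Ioi (0:ℝ), u ^ ((g-1)/2) * Real.exp (-(b * u)))
      = (1/b) ^ ((g+1)/2) * Real.Gamma ((g+1)/2) := by
    have := integral_rpow_mul_exp_neg_mul_Ioi (a := (g+1)/2) (r := b) (by linarith) hb
    have harg : (g+1)/2 - 1 = (g-1)/2 := by ring
    rw [harg] at this
    simpa using this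
  rw [lhs_eq, rhs_eq] at key
  linarith

private lemma gamma_lower {s : ℝ} (h1 : 1/2 ≤ s) (h2 : s ≤ 1) :
    Real.exp (-1) ≤ Real.Gamma s := by
  have hs : 0 < s := by linarith
  rw [Real.Gamma_eq_integral hs]
  have hint : IntegrableOn (fun x : ℝ => Real.exp (-x) * x ^ (s-1)) (Ioi 0) :=
    Real.GammaIntegral_convergent hs
  have step1 : ∫ x in Ioc (0:ℝ) 1, Real.exp (-x) * x ^ (s-1)
      ≤ ∫ x in Ioi (0:ℝ), Real.exp (-x) * x ^ (s-1) := by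
    apply setIntegral_mono_set hint
    · filter_upwards [ae_restrict_mem measurableSet_Ioi] with x hx using
        mul_nonneg (Real.exp_nonneg _) (Real.rpow_nonneg (le_of_lt hx) _)
    · filter_upwards with x hx using hx.1
  refine le_trans ?_ step1
  have hrint : IntervalIntegrable (fun x : ℝ => x ^ (s-1)) volume 0 1 :=
    intervalIntegral.intervalIntegrable_rpow' (by linarith)
  have hIoc : IntegrableOn (fun x : ℝ => x ^ (s-1)) (Ioc (0:ℝ) 1) := by
    have := hrint.1
    simpa [uIoc_of_le (by norm_num : (0:ℝ) ≤ 1)] using hrint.def'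
  have step2 : ∫ x in Ioc (0:ℝ) 1, Real.exp (-1) * x ^ (s-1)
      ≤ ∫ x in Ioc (0:ℝ) 1, Real.exp (-x) * x ^ (s-1) := by
    apply setIntegral_mono_on (hIoc.const_mul _) (hint.mono_set (fun x hx => hx.1))
      measurableSet_Ioc
    intro x hx
    have : Real.exp (-1) ≤ Real.exp (-x) := Real.exp_le_exp.mpr (by linarith [hx.2])
    exact mul_le_mul_of_nonneg_right this (Real.rpow_nonneg (le_of_lt hx.1) _)
  refine le_trans ?_ step2
  rw [integral_const_mul]
  have hval : ∫ x in Ioc (0:ℝ) 1, x ^ (s-1) = 1/s := by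
    rw [← intervalIntegral.integral_of_le (by norm_num : (0:ℝ) ≤ 1)]
    rw [integral_rpow (Or.inl (by linarith : (-1:ℝ) < s - 1))]
    have he : s - 1 + 1 = s := by ring
    rw [he, Real.one_rpow, Real.zero_rpow hs.ne']
    norm_num
  rw [hval]
  have : (1:ℝ) ≤ 1/s := by
    rw [le_div_iff₀ hs]; linarith
  nlinarith [Real.exp_pos (-1 : ℝ)]

private lemma tail_linear_gauss {b c : ℝ} (hb : 0 < b) (hc : 0 < c) :
    ∫ t in Ioi c, t * Real.exp (-b * t^2) = Real.exp (-b * c^2) / (2*b) := by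
  have hderiv : ∀ x ∈ Ioi c, HasDerivAt (fun t : ℝ => -Real.exp (-b * t^2) / (2*b))
      (x * Real.exp (-b * x^2)) x := by
    intro x _
    have h1 : HasDerivAt (fun t : ℝ => -b * t^2) (-b * (2*x)) x := by
      simpa using ((hasDerivAt_pow 2 x).const_mul (-b))
    have h2 := (h1.exp).neg.div_const (2*b)
    refine h2.congr_deriv ?_
    rw [div_eq_iff (mul_ne_zero two_ne_zero hb.ne')]
    ring
  have hint : IntegrableOn (fun t : ℝ => t * Real.exp (-b * t^2)) (Ioi c) := by
    apply (integrable_mul_exp_neg_mul_sq hb).integrableOn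
  have hlim : Tendsto (fun t : ℝ => -Real.exp (-b * t^2) / (2*b)) atTop (nhds 0) := by
    have h1 : Tendsto (fun t : ℝ => -b * t^2) atTop atBot := by
      apply Tendsto.const_mul_atTop_of_neg (by linarith : -b < 0)
      exact tendsto_pow_atTop (by norm_num)
    have := (Real.tendsto_exp_atBot.comp h1).neg.div_const (2*b)
    simpa using this
  have hcont : ContinuousWithinAt (fun t : ℝ => -Real.exp (-b * t^2) / (2*b)) (Ici c) c := by
    apply Continuous.continuousWithinAt
    continuity
  have := integral_Ioi_of_hasDerivAt_of_tendsto (f := fun t : ℝ => -Real.exp (-b * t^2) / (2*b))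
    hcont hderiv hint hlim
  rw [this]
  field_simp
  ring

private lemma exp_rpow' (x y : ℝ) : (Real.exp x) ^ y = Real.exp (x * y) := by
  rw [Real.rpow_def_of_pos (Real.exp_pos x), Real.log_exp]

set_option maxHeartbeats 1600000 in
private lemma main_bound {α : ℝ} (hα : 100 ≤ α) :
    Real.exp (-(α ^ (-(1:ℝ)/5)) / 4) *
        (1 - 10 * Real.exp 1 / 3 * α ^ ((2:ℝ)/5) * Real.exp (-(α ^ ((1:ℝ)/5)) / 10))
      ≤ (∫ t : ℝ, |Real.sin t| ^ α / |t| ^ ((⌊α⌋ : ℝ))) /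
          ((6 / α) ^ ((α - ⌊α⌋ + 1) / 2) * Real.Gamma ((α - ⌊α⌋ + 1) / 2)) ∧
    (∫ t : ℝ, |Real.sin t| ^ α / |t| ^ ((⌊α⌋ : ℝ))) /
          ((6 / α) ^ ((α - ⌊α⌋ + 1) / 2) * Real.Gamma ((α - ⌊α⌋ + 1) / 2))
      ≤ Real.exp ((α ^ (-(1:ℝ)/5)) / 16) +
        10 * Real.exp 1 / 3 * α ^ ((2:ℝ)/5) * Real.exp (-(α ^ ((1:ℝ)/5)) / 10) +
        Real.exp 1 / 3 * α * (85/96) ^ (α - 3) := by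
  have hα0 : (0:ℝ) < α := by linarith
  set n : ℤ := ⌊α⌋ with hn
  set γ : ℝ := α - n with hγ
  have hfloor_le : (n:ℝ) ≤ α := Int.floor_le α
  have hfloor_gt : α - 1 < (n:ℝ) := Int.sub_one_lt_floor α
  have hγ0 : 0 ≤ γ := by rw [hγ]; linarith
  have hγ1 : γ ≤ 1 := by rw [hγ]; linarith
  set δ : ℝ := α ^ (-(2:ℝ)/5) with hδ
  have hδ0 : 0 < δ := Real.rpow_pos_of_pos hα0 _
  have hδ1 : δ ≤ 1 := Real.rpow_le_one_of_one_le_of_nonpos (by linarith) (by norm_num)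
  set F : ℝ → ℝ := fun t => |Real.sin t| ^ α / |t| ^ ((n:ℝ)) with hF
  set G : ℝ := (6 / α) ^ ((γ + 1) / 2) * Real.Gamma ((γ + 1) / 2) with hG
  set A : ℝ := 10 * Real.exp 1 / 3 * α ^ ((2:ℝ)/5) * Real.exp (-(α ^ ((1:ℝ)/5)) / 10) with hA
  set B : ℝ := Real.exp 1 / 3 * α * (85/96) ^ (α - 3) with hB
  -- identities for delta powers
  have hid1 : α * δ^3 = α ^ (-(1:ℝ)/5) := by
    rw [hδ, ← Real.rpow_natCast (α ^ (-(2:ℝ)/5)) 3, ← Real.rpow_mul hα0.le]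
    nth_rewrite 1 [← Real.rpow_one α]
    rw [← Real.rpow_add hα0]
    norm_num
  have hid2 : α/10 * δ^2 = α ^ ((1:ℝ)/5) / 10 := by
    rw [hδ, ← Real.rpow_natCast (α ^ (-(2:ℝ)/5)) 2, ← Real.rpow_mul hα0.le,
      div_mul_eq_mul_div]
    nth_rewrite 1 [← Real.rpow_one α]
    rw [← Real.rpow_add hα0]
    norm_num
  have hid3 : δ * α ^ ((2:ℝ)/5) = 1 := by
    rw [hδ, ← Real.rpow_add hα0]
    norm_num
  have hδinv : α ^ ((2:ℝ)/5) = 1/δ := eq_one_div_of_mul_eq_one_right hid3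
  -- form of F on positive reals
  have hFform : ∀ t : ℝ, 0 < t → F t = t ^ γ * (|Real.sin t| / t) ^ α := by
    intro t ht
    rw [hF]
    simp only []
    rw [abs_of_pos ht, Real.div_rpow (abs_nonneg _) ht.le]
    symm
    have h1 : t ^ γ / t ^ α = (t ^ ((n:ℝ)))⁻¹ := by
      rw [div_eq_iff (Real.rpow_pos_of_pos ht _).ne', ← Real.rpow_neg ht.le,
        ← Real.rpow_add ht]
      congr 1
      rw [hγ]; ring
    calc t ^ γ * (|Real.sin t| ^ α / t ^ α)
        = |Real.sin t| ^ α * (t ^ γ / t ^ α) := by ring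
      _ = |Real.sin t| ^ α / t ^ ((n:ℝ)) := by rw [h1, div_eq_mul_inv]
  have hFnn : ∀ t : ℝ, 0 ≤ F t := fun t =>
    div_nonneg (Real.rpow_nonneg (abs_nonneg _) _) (Real.rpow_nonneg (abs_nonneg _) _)
  have hFmeas : Measurable F := by
    apply Measurable.div
    · exact (Continuous.rpow_const (continuous_sin.abs) (fun x => Or.inr hα0.le)).measurable
    · refine (Continuous.rpow_const continuous_abs (fun x => Or.inr ?_)).measurable
      have : (99:ℝ) ≤ (n:ℝ) := by linarith
      linarith
  -- numeric facts about sin 1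
  have hsin1_le : Real.sin 1 ≤ 85/96 := by
    have hb := Real.sin_bound (x := (1:ℝ)) (by norm_num)
    have := (abs_le.mp hb).2; norm_num at this ⊢; linarith
  have hsin1_pos : 0 < Real.sin 1 := Real.sin_pos_of_pos_of_lt_pi one_pos
    (by linarith [Real.pi_gt_three])
  -- pointwise tail bound on Ioi 1
  have P4 : ∀ t ∈ Ioi (1:ℝ), F t ≤ (85/96) ^ (α-3) * t ^ (-(2:ℝ)) := by
    intro t ht
    have ht1 : (1:ℝ) ≤ t := le_of_lt ht
    have ht0 : (0:ℝ) < t := by linarith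
    have hsplit : |Real.sin t| ^ α = |Real.sin t| ^ (α-3) * |Real.sin t| ^ (3:ℝ) := by
      rw [← Real.rpow_add' (abs_nonneg _) (show α - 3 + 3 ≠ 0 by intro h0; linarith)]
      norm_num
    have h1 : |Real.sin t| ^ (α-3) ≤ (85/96) ^ (α-3) * t ^ (α-3) := by
      calc |Real.sin t| ^ (α-3) ≤ (Real.sin 1 * t) ^ (α-3) :=
            Real.rpow_le_rpow (abs_nonneg _) (abs_sin_le_global ht1) (by linarith)
        _ = Real.sin 1 ^ (α-3) * t ^ (α-3) := Real.mul_rpow hsin1_pos.le ht0.le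
        _ ≤ (85/96) ^ (α-3) * t ^ (α-3) := by
            apply mul_le_mul_of_nonneg_right _ (Real.rpow_nonneg ht0.le _)
            exact Real.rpow_le_rpow hsin1_pos.le hsin1_le (by linarith)
    have h2 : |Real.sin t| ^ (3:ℝ) ≤ 1 :=
      Real.rpow_le_one (abs_nonneg _) (Real.abs_sin_le_one t) (by norm_num)
    have h3 : F t ≤ ((85/96) ^ (α-3) * t ^ (α-3) * 1) / t ^ ((n:ℝ)) := by
      rw [hF]
      simp only []
      rw [abs_of_pos ht0, hsplit]
      apply (div_le_div_iff_of_pos_right (Real.rpow_pos_of_pos ht0 _)).mpr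
      exact mul_le_mul h1 h2 (Real.rpow_nonneg (abs_nonneg _) _) (by positivity)
    have h4 : ((85/96) ^ (α-3) * t ^ (α-3) * 1) / t ^ ((n:ℝ))
        = (85/96) ^ (α-3) * t ^ (α - 3 - n) := by
      rw [mul_one, mul_div_assoc, ← Real.rpow_sub ht0]
    have h5 : t ^ (α-3-(n:ℝ)) ≤ t ^ (-(2:ℝ)) :=
      Real.rpow_le_rpow_of_exponent_le ht1 (by linarith)
    calc F t ≤ ((85/96) ^ (α-3) * t ^ (α-3) * 1) / t ^ ((n:ℝ)) := h3
      _ = (85/96) ^ (α-3) * t ^ (α - 3 - n) := h4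
      _ ≤ (85/96) ^ (α-3) * t ^ (-(2:ℝ)) := by
          apply mul_le_mul_of_nonneg_left h5 (Real.rpow_nonneg (by norm_num) _)
  -- pointwise central bounds on Ioc 0 δ
  have hπ : (1:ℝ) < Real.pi := by linarith [Real.pi_gt_three]
  have P1 : ∀ t ∈ Ioc (0:ℝ) δ,
      F t ≤ Real.exp (α * δ^3 / 16) * (t ^ γ * Real.exp (-(α/6) * t^2)) := by
    intro t ht
    have ht0 : 0 < t := ht.1
    have htδ : t ≤ δ := ht.2
    have ht1 : t ≤ 1 := le_trans htδ hδ1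
    have hsp : 0 < Real.sin t := Real.sin_pos_of_pos_of_lt_pi ht0 (by linarith)
    have habs : |Real.sin t| = Real.sin t := abs_of_pos hsp
    have hratio : |Real.sin t| / t ≤ Real.exp (-(t^2/6) + t^3/16) := by
      rw [habs, div_le_iff₀ ht0]
      calc Real.sin t ≤ t * Real.exp (-(t^2/6) + t^3/16) := sin_upper ht0 ht1
        _ = Real.exp (-(t^2/6) + t^3/16) * t := by ring
    have hpow : (|Real.sin t| / t) ^ α ≤ Real.exp (-(α/6) * t^2 + α * t^3/16) := by
      calc (|Real.sin t| / t) ^ α ≤ (Real.exp (-(t^2/6) + t^3/16)) ^ α :=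
            Real.rpow_le_rpow (div_nonneg (abs_nonneg _) ht0.le) hratio hα0.le
        _ = Real.exp ((-(t^2/6) + t^3/16) * α) := exp_rpow' _ _
        _ = Real.exp (-(α/6) * t^2 + α * t^3/16) := by ring_nf
    have hexp2 : Real.exp (-(α/6) * t^2 + α * t^3/16)
        ≤ Real.exp (-(α/6) * t^2) * Real.exp (α * δ^3/16) := by
      rw [← Real.exp_add]
      apply Real.exp_le_exp.mpr
      have h3 : t^3 ≤ δ^3 := pow_le_pow_left₀ ht0.le htδ 3
      nlinarith
    rw [hFform t ht0]
    calc t ^ γ * (|Real.sin t| / t) ^ α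
        ≤ t ^ γ * (Real.exp (-(α/6) * t^2) * Real.exp (α * δ^3/16)) := by
          apply mul_le_mul_of_nonneg_left (le_trans hpow hexp2) (Real.rpow_nonneg ht0.le _)
      _ = Real.exp (α * δ^3 / 16) * (t ^ γ * Real.exp (-(α/6) * t^2)) := by ring
  have P2 : ∀ t ∈ Ioc (0:ℝ) δ,
      Real.exp (-(α * δ^3) / 4) * (t ^ γ * Real.exp (-(α/6) * t^2)) ≤ F t := by
    intro t ht
    have ht0 : 0 < t := ht.1
    have htδ : t ≤ δ := ht.2
    have ht1 : t ≤ 1 := le_trans htδ hδ1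
    have hsp : 0 < Real.sin t := Real.sin_pos_of_pos_of_lt_pi ht0 (by linarith)
    have habs : |Real.sin t| = Real.sin t := abs_of_pos hsp
    have hratio : Real.exp (-(t^2/6) - t^3/4) ≤ |Real.sin t| / t := by
      rw [habs, le_div_iff₀ ht0]
      calc Real.exp (-(t^2/6) - t^3/4) * t = t * Real.exp (-(t^2/6) - t^3/4) := by ring
        _ ≤ Real.sin t := sin_lower ht0 ht1
    have hpow : Real.exp (-(α/6) * t^2 - α * t^3/4) ≤ (|Real.sin t| / t) ^ α := by
      calc Real.exp (-(α/6) * t^2 - α * t^3/4)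
          = Real.exp ((-(t^2/6) - t^3/4) * α) := by ring_nf
        _ = (Real.exp (-(t^2/6) - t^3/4)) ^ α := (exp_rpow' _ _).symm
        _ ≤ (|Real.sin t| / t) ^ α :=
            Real.rpow_le_rpow (Real.exp_nonneg _) hratio hα0.le
    have hexp2 : Real.exp (-(α/6) * t^2) * Real.exp (-(α * δ^3)/4)
        ≤ Real.exp (-(α/6) * t^2 - α * t^3/4) := by
      rw [← Real.exp_add]
      apply Real.exp_le_exp.mpr
      have h3 : t^3 ≤ δ^3 := pow_le_pow_left₀ ht0.le htδ 3
      nlinarith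
    rw [hFform t ht0]
    calc Real.exp (-(α * δ^3) / 4) * (t ^ γ * Real.exp (-(α/6) * t^2))
        = t ^ γ * (Real.exp (-(α/6) * t^2) * Real.exp (-(α * δ^3)/4)) := by ring
      _ ≤ t ^ γ * (|Real.sin t| / t) ^ α := by
          apply mul_le_mul_of_nonneg_left (le_trans hexp2 hpow) (Real.rpow_nonneg ht0.le _)
  -- pointwise bound on Ioc δ 1
  have P3 : ∀ t ∈ Ioc δ (1:ℝ), F t ≤ (1 + t) * Real.exp (-(α/10) * t^2) := by
    intro t ht
    have ht0 : 0 < t := lt_trans hδ0 ht.1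
    have ht1 : t ≤ 1 := ht.2
    have hsp : 0 < Real.sin t := Real.sin_pos_of_pos_of_lt_pi ht0 (by linarith)
    have habs : |Real.sin t| = Real.sin t := abs_of_pos hsp
    have hratio : |Real.sin t| / t ≤ Real.exp (-(t^2/6) + t^3/16) := by
      rw [habs, div_le_iff₀ ht0]
      calc Real.sin t ≤ t * Real.exp (-(t^2/6) + t^3/16) := sin_upper ht0 ht1
        _ = Real.exp (-(t^2/6) + t^3/16) * t := by ring
    have hpow : (|Real.sin t| / t) ^ α ≤ Real.exp (-(α/10) * t^2) := by
      calc (|Real.sin t| / t) ^ α ≤ (Real.exp (-(t^2/6) + t^3/16)) ^ α :=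
            Real.rpow_le_rpow (div_nonneg (abs_nonneg _) ht0.le) hratio hα0.le
        _ = Real.exp ((-(t^2/6) + t^3/16) * α) := exp_rpow' _ _
        _ ≤ Real.exp (-(α/10) * t^2) := by
            apply Real.exp_le_exp.mpr
            have h3 : t^3 ≤ t^2 := by nlinarith
            nlinarith
    have htγ : t ^ γ ≤ 1 + t := by
      have := Real.rpow_le_one ht0.le ht1 hγ0
      linarith
    rw [hFform t ht0]
    have h1 : (0:ℝ) ≤ (|Real.sin t| / t) ^ α := Real.rpow_nonneg
      (div_nonneg (abs_nonneg _) ht0.le) _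
    calc t ^ γ * (|Real.sin t| / t) ^ α ≤ (1 + t) * (|Real.sin t| / t) ^ α :=
          mul_le_mul_of_nonneg_right htγ h1
      _ ≤ (1 + t) * Real.exp (-(α/10) * t^2) :=
          mul_le_mul_of_nonneg_left hpow (by linarith)
  -- integrability of F
  have hIntF1 : IntegrableOn F (Ioc (0:ℝ) 1) := by
    apply Integrable.mono' (g := fun _ : ℝ => (1:ℝ))
      (integrableOn_const measure_Ioc_lt_top.ne)
      (hFmeas.aestronglyMeasurable.restrict)
    filter_upwards [ae_restrict_mem measurableSet_Ioc] with t ht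
    rw [Real.norm_of_nonneg (hFnn t), hFform t ht.1]
    have h1 : t ^ γ ≤ 1 := Real.rpow_le_one ht.1.le ht.2 hγ0
    have h2 : (|Real.sin t| / t) ^ α ≤ 1 := by
      apply Real.rpow_le_one (div_nonneg (abs_nonneg _) ht.1.le) _ hα0.le
      rw [div_le_one ht.1,
        abs_of_nonneg (Real.sin_nonneg_of_nonneg_of_le_pi ht.1.le (by linarith [ht.2]))]
      exact Real.sin_le ht.1.le
    calc t ^ γ * (|Real.sin t| / t) ^ α ≤ 1 * 1 :=
          mul_le_mul h1 h2 (Real.rpow_nonneg (div_nonneg (abs_nonneg _) ht.1.le) _)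
            (by norm_num)
      _ = 1 := by norm_num
  have hIntF2 : IntegrableOn F (Ioi (1:ℝ)) := by
    apply Integrable.mono' (g := fun t : ℝ => (85/96) ^ (α-3) * t ^ (-(2:ℝ)))
      ((integrableOn_Ioi_rpow_of_lt (by norm_num : (-2:ℝ) < -1) one_pos).const_mul _)
      (hFmeas.aestronglyMeasurable.restrict)
    filter_upwards [ae_restrict_mem measurableSet_Ioi] with t ht
    rw [Real.norm_of_nonneg (hFnn t)]
    exact P4 t ht
  have hIntF : IntegrableOn F (Ioi (0:ℝ)) := by
    rw [← Ioc_union_Ioi_eq_Ioi (zero_le_one : (0:ℝ) ≤ 1)]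
    exact hIntF1.union hIntF2
  -- gaussian integrals
  have hb6 : (0:ℝ) < α/6 := by linarith
  have hb10 : (0:ℝ) < α/10 := by linarith
  have hGauss : ∫ t in Ioi (0:ℝ), t ^ γ * Real.exp (-(α/6) * t^2) = G / 2 := by
    rw [gauss_moment hb6 (by linarith : (-1:ℝ) < γ), hG, one_div_div]
  have hIg6 : IntegrableOn (fun t : ℝ => t ^ γ * Real.exp (-(α/6) * t^2)) (Ioi 0) :=
    (integrable_rpow_mul_exp_neg_mul_sq hb6 (by linarith : (-1:ℝ) < γ)).integrableOn
  have hIg10 : Integrable (fun t : ℝ => (1 + t) * Real.exp (-(α/10) * t^2)) := by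
    have h1 : (fun t : ℝ => (1 + t) * Real.exp (-(α/10) * t^2))
        = fun t : ℝ => Real.exp (-(α/10) * t^2) + t * Real.exp (-(α/10) * t^2) := by
      funext t; ring
    rw [h1]
    exact (integrable_exp_neg_mul_sq hb10).add (integrable_mul_exp_neg_mul_sq hb10)
  -- the remainder integral bound
  set E : ℝ := Real.exp (-(α/10) * δ^2) with hE
  set Dv : ℝ := 10/(α*δ) * E with hDv
  have hRp : ∫ t in Ioi δ, (1 + t) * Real.exp (-(α/10) * t^2) ≤ Dv := by
    have hsplit : ∫ t in Ioi δ, (1 + t) * Real.exp (-(α/10) * t^2)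
        = (∫ t in Ioi δ, Real.exp (-(α/10) * t^2))
          + ∫ t in Ioi δ, t * Real.exp (-(α/10) * t^2) := by
      rw [← integral_add ((integrable_exp_neg_mul_sq hb10).integrableOn)
        ((integrable_mul_exp_neg_mul_sq hb10).integrableOn)]
      congr 1; funext t; ring
    have hlin : ∫ t in Ioi δ, t * Real.exp (-(α/10) * t^2) = E / (2 * (α/10)) := by
      rw [tail_linear_gauss hb10 hδ0, hE]
    have hconst : ∫ t in Ioi δ, Real.exp (-(α/10) * t^2)
        ≤ (1/δ) * (E / (2 * (α/10))) := by
      have hstep : ∫ t in Ioi δ, Real.exp (-(α/10) * t^2)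
          ≤ ∫ t in Ioi δ, (1/δ) * (t * Real.exp (-(α/10) * t^2)) := by
        apply setIntegral_mono_on ((integrable_exp_neg_mul_sq hb10).integrableOn)
          (((integrable_mul_exp_neg_mul_sq hb10).const_mul _).integrableOn)
          measurableSet_Ioi
        intro t ht
        have htδ : δ < t := ht
        have ht0 : 0 < t := lt_trans hδ0 htδ
        have h1 : 1 ≤ (1/δ) * t := by
          rw [one_div, inv_mul_eq_div, le_div_iff₀ hδ0]
          linarith
        calc Real.exp (-(α/10) * t^2) = 1 * Real.exp (-(α/10) * t^2) := by ring
          _ ≤ ((1/δ) * t) * Real.exp (-(α/10) * t^2) :=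
              mul_le_mul_of_nonneg_right h1 (Real.exp_nonneg _)
          _ = (1/δ) * (t * Real.exp (-(α/10) * t^2)) := by ring
      rw [integral_const_mul, hlin] at hstep
      exact hstep
    rw [hsplit, hlin, hDv]
    have hEpos : 0 < E := Real.exp_pos _
    have key : E / (2*(α/10)) = 5 * E / α := by field_simp; ring
    rw [key] at hconst ⊢
    have e1 : (1:ℝ)/δ * (5*E/α) = 5*E/(α*δ) := by
      rw [div_mul_div_comm, one_mul, mul_comm δ α]
    have e3 : 5*E/α ≤ 5*E/(α*δ) := by
      apply div_le_div_of_nonneg_left (by positivity) (by positivity)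
      nlinarith
    have e4 : 5*E/(α*δ) + 5*E/(α*δ) = 10/(α*δ)*E := by ring
    linarith
  -- splits
  have hsub1 : Ioc (0:ℝ) δ ⊆ Ioi 0 := fun x hx => hx.1
  have hsub2 : Ioi δ ⊆ Ioi (0:ℝ) := Ioi_subset_Ioi hδ0.le
  have hsub3 : Ioc δ (1:ℝ) ⊆ Ioi δ := fun x hx => hx.1
  have hsplitF : ∫ t in Ioi (0:ℝ), F t
      = (∫ t in Ioc (0:ℝ) δ, F t) + ∫ t in Ioi δ, F t := by
    rw [← setIntegral_union (Ioc_disjoint_Ioi le_rfl) measurableSet_Ioi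
      (hIntF.mono_set hsub1) (hIntF.mono_set hsub2), Ioc_union_Ioi_eq_Ioi hδ0.le]
  have hsplitF2 : ∫ t in Ioi δ, F t
      = (∫ t in Ioc δ (1:ℝ), F t) + ∫ t in Ioi (1:ℝ), F t := by
    rw [← setIntegral_union (Ioc_disjoint_Ioi le_rfl) measurableSet_Ioi
      ((hIntF.mono_set hsub2).mono_set hsub3) hIntF2, Ioc_union_Ioi_eq_Ioi hδ1]
  have hsplitG : ∫ t in Ioc (0:ℝ) δ, t ^ γ * Real.exp (-(α/6) * t^2)
      = G/2 - ∫ t in Ioi δ, t ^ γ * Real.exp (-(α/6) * t^2) := by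
    have h : ∫ t in Ioi (0:ℝ), t ^ γ * Real.exp (-(α/6) * t^2)
        = (∫ t in Ioc (0:ℝ) δ, t ^ γ * Real.exp (-(α/6) * t^2))
          + ∫ t in Ioi δ, t ^ γ * Real.exp (-(α/6) * t^2) := by
      rw [← setIntegral_union (Ioc_disjoint_Ioi le_rfl) measurableSet_Ioi
        (hIg6.mono_set hsub1) (hIg6.mono_set hsub2), Ioc_union_Ioi_eq_Ioi hδ0.le]
    rw [hGauss] at h
    linarith
  have hRgauss : ∫ t in Ioi δ, t ^ γ * Real.exp (-(α/6) * t^2) ≤ Dv := by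
    refine le_trans ?_ hRp
    apply setIntegral_mono_on (hIg6.mono_set hsub2) (hIg10.integrableOn) measurableSet_Ioi
    intro t ht
    have ht0 : 0 < t := lt_trans hδ0 ht
    have h1 : t ^ γ ≤ 1 + t := by
      rcases le_or_gt t 1 with h | h
      · have := Real.rpow_le_one ht0.le h hγ0
        linarith
      · have h2 := Real.rpow_le_rpow_of_exponent_le h.le hγ1
        rw [Real.rpow_one] at h2
        linarith
    have h2 : Real.exp (-(α/6) * t^2) ≤ Real.exp (-(α/10) * t^2) := by
      apply Real.exp_le_exp.mpr
      nlinarith [sq_nonneg t]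
    calc t ^ γ * Real.exp (-(α/6) * t^2) ≤ (1+t) * Real.exp (-(α/6) * t^2) :=
          mul_le_mul_of_nonneg_right h1 (Real.exp_nonneg _)
      _ ≤ (1+t) * Real.exp (-(α/10) * t^2) :=
          mul_le_mul_of_nonneg_left h2 (by linarith)
  -- central bounds
  set Kp : ℝ := Real.exp (α * δ^3 / 16) with hKp
  set Km : ℝ := Real.exp (-(α * δ^3) / 4) with hKm
  have hCU : ∫ t in Ioc (0:ℝ) δ, F t ≤ Kp * (G/2) := by
    have step1 : ∫ t in Ioc (0:ℝ) δ, F t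
        ≤ ∫ t in Ioc (0:ℝ) δ, Kp * (t ^ γ * Real.exp (-(α/6) * t^2)) :=
      setIntegral_mono_on (hIntF.mono_set hsub1)
        (((hIg6.mono_set hsub1)).const_mul _) measurableSet_Ioc P1
    have step2 : ∫ t in Ioc (0:ℝ) δ, t ^ γ * Real.exp (-(α/6) * t^2) ≤ G/2 := by
      rw [← hGauss]
      apply setIntegral_mono_set hIg6
      · filter_upwards [ae_restrict_mem measurableSet_Ioi] with t ht using
          mul_nonneg (Real.rpow_nonneg (le_of_lt ht) _) (Real.exp_nonneg _)
      · exact HasSubset.Subset.eventuallyLE hsub1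
    rw [integral_const_mul] at step1
    have hKp0 : (0:ℝ) ≤ Kp := Real.exp_nonneg _
    nlinarith
  have hCL : Km * (G/2 - Dv) ≤ ∫ t in Ioc (0:ℝ) δ, F t := by
    have step1 : ∫ t in Ioc (0:ℝ) δ, Km * (t ^ γ * Real.exp (-(α/6) * t^2))
        ≤ ∫ t in Ioc (0:ℝ) δ, F t :=
      setIntegral_mono_on (((hIg6.mono_set hsub1)).const_mul _)
        (hIntF.mono_set hsub1) measurableSet_Ioc P2
    rw [integral_const_mul, hsplitG] at step1
    have hKm0 : (0:ℝ) < Km := Real.exp_pos _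
    nlinarith
  -- tail bounds
  have hT1 : ∫ t in Ioc δ (1:ℝ), F t ≤ Dv := by
    refine le_trans ?_ hRp
    have step1 : ∫ t in Ioc δ (1:ℝ), F t
        ≤ ∫ t in Ioc δ (1:ℝ), (1 + t) * Real.exp (-(α/10) * t^2) :=
      setIntegral_mono_on ((hIntF.mono_set hsub2).mono_set hsub3)
        (hIg10.integrableOn) measurableSet_Ioc P3
    refine le_trans step1 ?_
    apply setIntegral_mono_set hIg10.integrableOn
    · filter_upwards [ae_restrict_mem measurableSet_Ioi] with t ht
      have ht0 : 0 < t := lt_trans hδ0 ht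
      exact mul_nonneg (by linarith) (Real.exp_nonneg _)
    · exact HasSubset.Subset.eventuallyLE hsub3
  have hT2 : ∫ t in Ioi (1:ℝ), F t ≤ (85/96) ^ (α-3) := by
    have step1 : ∫ t in Ioi (1:ℝ), F t
        ≤ ∫ t in Ioi (1:ℝ), (85/96) ^ (α-3) * t ^ (-(2:ℝ)) :=
      setIntegral_mono_on hIntF2
        ((integrableOn_Ioi_rpow_of_lt (by norm_num : (-2:ℝ) < -1) one_pos).const_mul _)
        measurableSet_Ioi P4
    rw [integral_const_mul, integral_Ioi_rpow_of_lt (by norm_num : (-2:ℝ) < -1) one_pos]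
      at step1
    norm_num at step1
    exact step1
  -- gamma bounds
  have hGam_pos : 0 < Real.Gamma ((γ+1)/2) := Real.Gamma_pos_of_pos (by linarith)
  have hG0 : 0 < G := by
    rw [hG]
    exact mul_pos (Real.rpow_pos_of_pos (by positivity) _) hGam_pos
  have hGlow : (6/α) * Real.exp (-1) ≤ G := by
    rw [hG]
    have h1 : (6/α) ≤ (6/α) ^ ((γ+1)/2) := by
      have h2 : (6/α : ℝ) ≤ 1 := by
        rw [div_le_one hα0]; linarith
      have h3 := Real.rpow_le_rpow_of_exponent_ge (by positivity : (0:ℝ) < 6/α) h2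
        (by linarith : (γ+1)/2 ≤ 1)
      rwa [Real.rpow_one] at h3
    exact mul_le_mul h1 (gamma_lower (by linarith) (by linarith)) (Real.exp_nonneg _)
      (Real.rpow_nonneg (by positivity) _)
  -- evenness
  have hFabs : ∀ x : ℝ, F |x| = F x := by
    intro x
    rw [hF]
    simp only []
    rw [abs_abs]
    rcases abs_choice x with h | h
    · rw [h]
    · rw [h, Real.sin_neg, abs_neg]
  have hEven : (∫ t : ℝ, F t) = 2 * ∫ t in Ioi (0:ℝ), F t := by
    rw [← integral_comp_abs (f := F)]
    congr 1
    funext t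
    rw [hFabs t]
  -- assembly
  have hIup : ∫ t in Ioi (0:ℝ), F t ≤ Kp * (G/2) + (Dv + (85/96) ^ (α-3)) := by
    rw [hsplitF, hsplitF2]
    linarith
  have hIlo : Km * (G/2 - Dv) ≤ ∫ t in Ioi (0:ℝ), F t := by
    rw [hsplitF]
    have h2 : 0 ≤ ∫ t in Ioi δ, F t :=
      setIntegral_nonneg measurableSet_Ioi (fun t _ => hFnn t)
    linarith
  have hee : Real.exp 1 * Real.exp (-1) = 1 := by
    rw [← Real.exp_add]; norm_num
  have hEE : E = Real.exp (-(α ^ ((1:ℝ)/5)) / 10) := by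
    rw [hE]
    congr 1
    rw [show -(α/10) * δ^2 = -(α/10 * δ^2) by ring, hid2]
    ring
  have hAform : A = 10 * Real.exp 1 / 3 * (1/δ) * E := by
    rw [hA, hδinv, hEE]
  have hA2D : A * ((6/α) * Real.exp (-1)) = 2 * Dv := by
    rw [hAform, hDv]
    calc 10 * Real.exp 1 / 3 * (1/δ) * E * ((6/α) * Real.exp (-1))
        = (Real.exp 1 * Real.exp (-1)) * (20/(α*δ) * E) := by ring
      _ = 2 * (10/(α*δ) * E) := by rw [hee]; ring
  have h6α : α * (6/α) = 6 := by field_simp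
  have hB2Q : B * ((6/α) * Real.exp (-1)) = 2 * (85/96) ^ (α-3) := by
    rw [hB]
    calc Real.exp 1 / 3 * α * (85/96) ^ (α-3) * ((6/α) * Real.exp (-1))
        = (Real.exp 1 * Real.exp (-1)) * (α * (6/α)) * ((85/96) ^ (α-3) / 3) := by ring
      _ = 1 * 6 * ((85/96) ^ (α-3) / 3) := by rw [hee, h6α]
      _ = 2 * (85/96) ^ (α-3) := by ring
  have hA0 : 0 ≤ A := by rw [hA]; positivity
  have hB0 : 0 ≤ B := by rw [hB]; positivity
  have hAG : 2 * Dv ≤ A * G := by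
    rw [← hA2D]
    exact mul_le_mul_of_nonneg_left hGlow hA0
  have hBG : 2 * (85/96) ^ (α-3) ≤ B * G := by
    rw [← hB2Q]
    exact mul_le_mul_of_nonneg_left hGlow hB0
  have hKpid : Kp = Real.exp (α ^ (-(1:ℝ)/5) / 16) := by rw [hKp, hid1]
  have hKmid : Km = Real.exp (-(α ^ (-(1:ℝ)/5)) / 4) := by rw [hKm, hid1]
  constructor
  · rw [hEven, le_div_iff₀ hG0, ← hKmid]
    have h1 : Km * (2*Dv) ≤ Km * (A*G) :=
      mul_le_mul_of_nonneg_left hAG (Real.exp_nonneg _)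
    have e1 : Km * (1 - A) * G = Km * G - Km * (A*G) := by ring
    have e2 : 2 * (Km * (G/2 - Dv)) = Km * G - Km * (2*Dv) := by ring
    rw [e1]
    linarith
  · rw [hEven, div_le_iff₀ hG0, ← hKpid]
    have e1 : (Kp + A + B) * G = Kp * G + A*G + B*G := by ring
    have e2 : 2 * (Kp * (G/2) + (Dv + (85/96) ^ (α-3)))
        = Kp * G + 2*Dv + 2*(85/96) ^ (α-3) := by ring
    rw [e1]
    linarith

private lemma lim_neg_pow : Tendsto (fun α : ℝ => α ^ (-(1:ℝ)/5)) atTop (nhds 0) := by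
  have h : (fun α : ℝ => α ^ (-(1:ℝ)/5)) = fun α : ℝ => α ^ (-(1/5 : ℝ)) := by
    norm_num
  rw [h]
  exact tendsto_rpow_neg_atTop (by norm_num)

private lemma lim_A : Tendsto
    (fun α : ℝ => 10 * Real.exp 1 / 3 * α ^ ((2:ℝ)/5) * Real.exp (-(α ^ ((1:ℝ)/5)) / 10))
    atTop (nhds 0) := by
  have core : Tendsto (fun α : ℝ => α ^ ((2:ℝ)/5) * Real.exp (-(α ^ ((1:ℝ)/5)) / 10))
      atTop (nhds 0) := by
    have h1 := tendsto_rpow_mul_exp_neg_mul_atTop_nhds_zero 2 (1/10) (by norm_num)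
    have h2 : Tendsto (fun α : ℝ => α ^ ((1:ℝ)/5)) atTop atTop :=
      tendsto_rpow_atTop (by norm_num)
    have h3 := h1.comp h2
    apply h3.congr'
    filter_upwards [eventually_gt_atTop (0:ℝ)] with α hα
    show (α ^ ((1:ℝ)/5)) ^ (2:ℝ) * Real.exp (-(1/10) * α ^ ((1:ℝ)/5)) = _
    rw [← Real.rpow_mul hα.le]
    norm_num
    left
    congr 1
    ring
  have := core.const_mul (10 * Real.exp 1 / 3)
  rw [mul_zero] at this
  apply this.congr
  intro α
  ring

private lemma lim_B : Tendsto
    (fun α : ℝ => Real.exp 1 / 3 * α * (85/96 : ℝ) ^ (α - 3)) atTop (nhds 0) := by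
  set b : ℝ := -Real.log (85/96) with hb
  have hb0 : 0 < b := by
    rw [hb, neg_pos]
    exact Real.log_neg (by norm_num) (by norm_num)
  set C : ℝ := Real.exp 1 / 3 * Real.exp (3*b) with hC
  have hco := (tendsto_rpow_mul_exp_neg_mul_atTop_nhds_zero 1 b hb0).const_mul C
  rw [mul_zero] at hco
  apply hco.congr
  intro α
  rw [Real.rpow_one, Real.rpow_def_of_pos (by norm_num : (0:ℝ) < 85/96)]
  calc C * (α * Real.exp (-b * α))
      = Real.exp 1 / 3 * α * (Real.exp (3*b) * Real.exp (-b*α)) := by rw [hC]; ring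
    _ = Real.exp 1 / 3 * α * Real.exp (3*b + (-b*α)) := by rw [Real.exp_add]
    _ = Real.exp 1 / 3 * α * Real.exp (Real.log (85/96) * (α - 3)) := by
        congr 1
        rw [hb]
        ring_nf

private lemma lim_lo : Tendsto
    (fun α : ℝ => Real.exp (-(α ^ (-(1:ℝ)/5)) / 4) *
      (1 - 10 * Real.exp 1 / 3 * α ^ ((2:ℝ)/5) * Real.exp (-(α ^ ((1:ℝ)/5)) / 10)))
    atTop (nhds 1) := by
  have h1 : Tendsto (fun α : ℝ => Real.exp (-(α ^ (-(1:ℝ)/5)) / 4)) atTop (nhds 1) := by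
    have hz : Tendsto (fun α : ℝ => -(α ^ (-(1:ℝ)/5)) / 4) atTop (nhds 0) := by
      have := (lim_neg_pow.neg).div_const 4
      rw [show -(0:ℝ)/4 = 0 by norm_num] at this
      exact this
    have := (Real.continuous_exp.tendsto 0).comp hz
    rw [Real.exp_zero] at this
    exact this
  have h2 : Tendsto (fun α : ℝ =>
      1 - 10 * Real.exp 1 / 3 * α ^ ((2:ℝ)/5) * Real.exp (-(α ^ ((1:ℝ)/5)) / 10))
      atTop (nhds 1) := by
    have := tendsto_const_nhds (α := ℝ) (f := atTop) (x := (1:ℝ)) |>.sub lim_A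
    rw [sub_zero] at this
    exact this
  have := h1.mul h2
  rw [mul_one] at this
  exact this

private lemma lim_hi : Tendsto
    (fun α : ℝ => Real.exp ((α ^ (-(1:ℝ)/5)) / 16) +
      10 * Real.exp 1 / 3 * α ^ ((2:ℝ)/5) * Real.exp (-(α ^ ((1:ℝ)/5)) / 10) +
      Real.exp 1 / 3 * α * (85/96 : ℝ) ^ (α - 3)) atTop (nhds 1) := by
  have h1 : Tendsto (fun α : ℝ => Real.exp ((α ^ (-(1:ℝ)/5)) / 16)) atTop (nhds 1) := by
    have hz : Tendsto (fun α : ℝ => (α ^ (-(1:ℝ)/5)) / 16) atTop (nhds 0) := by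
      have := lim_neg_pow.div_const 16
      rw [show (0:ℝ)/16 = 0 by norm_num] at this
      exact this
    have := (Real.continuous_exp.tendsto 0).comp hz
    rw [Real.exp_zero] at this
    exact this
  have := (h1.add lim_A).add lim_B
  rw [add_zero, add_zero] at this
  exact this

theorem moment_integral_floor_asymptotic :
    Tendsto (fun α : ℝ =>
        (∫ t : ℝ, |Real.sin t| ^ α / |t| ^ ((⌊α⌋ : ℝ))) /
          ((6 / α) ^ ((α - ⌊α⌋ + 1) / 2) * Real.Gamma ((α - ⌊α⌋ + 1) / 2)))
      atTop (nhds 1) := by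
  apply tendsto_of_tendsto_of_tendsto_of_le_of_le' lim_lo lim_hi
  · filter_upwards [eventually_ge_atTop (100:ℝ)] with α hα using (main_bound hα).1
  · filter_upwards [eventually_ge_atTop (100:ℝ)] with α hα using (main_bound hα).2
end
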